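/- arXiv:1911.06737 — 8 statements merged into one kernel-verified Lean document; each statement's English description precedes it below -/
import Mathlib

section
/- Let P be an irreducible stochastic matrix on a finite state space V with unique invariant distribution π. Then for every state s, π_s = (1 + Σ_{i∈V} P_{si} τ_i^s)^{-1}, where τ_i^s denotes the expected hitting time on s of the Markov chain with transition matrix P started at i. -/
open Finset

/-- For an irreducible stochastic matrix `P` on a finite state space with
invariant distribution `π`, and `τ` the vector of expected hitting times on `s`
(characterized as the solution of the standard hitting-time linear system),
we have `π s = (1 + ∑ i, P s i * τ i)⁻¹`. -/
theorem bonacich_invariant_eq_inv_return_time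
    {V : Type*} [Fintype V] [DecidableEq V] [Nonempty V]
    (P : Matrix V V ℝ)
    (hPnn : ∀ i j, 0 ≤ P i j)
    (hProw : ∀ i, ∑ j, P i j = 1)
    (hPirr : ∀ i j, ∃ k : ℕ, 0 < (P ^ k) i j)
    (π : V → ℝ)
    (hπnn : ∀ i, 0 ≤ π i) (hπsum : ∑ i, π i = 1)
    (hπinv : ∀ j, π j = ∑ i, π i * P i j)
    (s : V) (τ : V → ℝ)
    (hτs : τ s = 0)
    (hτ : ∀ i, i ≠ s → τ i = 1 + ∑ j, P i j * τ j) :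
    π s = (1 + ∑ i, P s i * τ i)⁻¹ := by
  have h1 : ∑ i, π i * τ i = ∑ i ∈ univ.erase s, π i * (1 + ∑ j, P i j * τ j) := by
    rw [← Finset.add_sum_erase univ (fun i => π i * τ i) (mem_univ s), hτs, mul_zero, zero_add]
    exact Finset.sum_congr rfl fun i hi => by rw [hτ i (Finset.ne_of_mem_erase hi)]
  have h2 : ∑ i ∈ univ.erase s, π i * (1 + ∑ j, P i j * τ j)
      = (∑ i, π i * (1 + ∑ j, P i j * τ j)) - π s * (1 + ∑ j, P s j * τ j) := by
    rw [Finset.sum_erase_eq_sub (mem_univ s)]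
  have h3 : ∑ i, π i * (1 + ∑ j, P i j * τ j) = 1 + ∑ i, π i * τ i := by
    have : ∑ i, π i * ∑ j, P i j * τ j = ∑ j, π j * τ j := by
      calc ∑ i, π i * ∑ j, P i j * τ j
          = ∑ i, ∑ j, π i * P i j * τ j := by
            refine Finset.sum_congr rfl fun i _ => ?_
            rw [Finset.mul_sum]
            exact Finset.sum_congr rfl fun j _ => by ring
        _ = ∑ j, ∑ i, π i * P i j * τ j := Finset.sum_comm
        _ = ∑ j, π j * τ j := by
            refine Finset.sum_congr rfl fun j _ => ?_
            rw [← Finset.sum_mul, ← hπinv j]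
    simp only [mul_add, mul_one, Finset.sum_add_distrib, hπsum, this]
  have hgs : π s * (1 + ∑ j, P s j * τ j) = 1 := by linarith [h1, h2.symm ▸ h1, h3]
  exact eq_inv_of_mul_eq_one_right (by linarith [hgs] : (1 + ∑ i, P s i * τ i) * π s = 1)
end

section
/- In the centrality game with m = 1 out-link per node, for any node s and any strategy profile x of the other players: if the in-neighborhood N_s^-(x) of s is nonempty, then the best response set of s equals N_s^-(x). -/
open Finset Matrix

/-- Adjacency matrix of the graph formed when each node `i` places its single
out-link towards `x i`. -/
noncomputable def R1 {V : Type*} [Fintype V] [DecidableEq V] (x : V → V) :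
    Matrix V V ℝ :=
  Matrix.of fun i j => if x i = j then (1 : ℝ) else 0

/-- Utility of player `s` in the game `Γ(V, β, η, 1)`: its Bonacich centrality
`((1-β)(I - β R(x)ᵀ)⁻¹ η)_s` in the formed graph. -/
noncomputable def util1 {V : Type*} [Fintype V] [DecidableEq V]
    (β : ℝ) (η : V → ℝ) (x : V → V) (s : V) : ℝ :=
  ((1 - β) • ((1 - β • (R1 x)ᵀ)⁻¹).mulVec η) s

section Aux

variable {V : Type*} [Fintype V] [DecidableEq V]

open Classical in
/-- `β ^ (first hitting time of s from j under x)`, or `0` if `s` is never hit. -/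
noncomputable def hw (β : ℝ) (x : V → V) (s j : V) : ℝ :=
  if h : ∃ k, x^[k] j = s then β ^ Nat.find h else 0

lemma hw_self (β : ℝ) (x : V → V) (s : V) : hw β x s s = 1 := by
  classical
  unfold hw
  rw [dif_pos ⟨0, rfl⟩]
  have h0 : Nat.find (⟨0, rfl⟩ : ∃ k, x^[k] s = s) = 0 :=
    (Nat.find_eq_zero _).mpr rfl
  rw [h0, pow_zero]

lemma hw_nonneg {β : ℝ} (hβ0 : 0 ≤ β) (x : V → V) (s j : V) : 0 ≤ hw β x s j := by
  unfold hw
  split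
  · exact pow_nonneg hβ0 _
  · exact le_refl 0

lemma hw_le_one {β : ℝ} (hβ0 : 0 ≤ β) (hβ1 : β ≤ 1) (x : V → V) (s j : V) :
    hw β x s j ≤ 1 := by
  unfold hw
  split
  · exact pow_le_one₀ hβ0 hβ1
  · exact zero_le_one

lemma hw_step (β : ℝ) (x : V → V) (s j : V) (hj : j ≠ s) :
    hw β x s j = β * hw β x s (x j) := by
  classical
  unfold hw
  by_cases h : ∃ k, x^[k] j = s
  · rw [dif_pos h]
    have h' : ∃ k, x^[k] (x j) = s := by
      obtain ⟨k, hk⟩ := h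
      cases k with
      | zero => exact absurd hk hj
      | succ m => exact ⟨m, by rwa [Function.iterate_succ_apply] at hk⟩
    rw [dif_pos h']
    have h0 : Nat.find h ≠ 0 := by
      intro h0
      exact hj (by simpa [h0] using Nat.find_spec h)
    obtain ⟨m, hm⟩ := Nat.exists_eq_succ_of_ne_zero h0
    have hm' : Nat.find h' = m := by
      have hspec : x^[m] (x j) = s := by
        have hs := Nat.find_spec h
        rw [hm, Function.iterate_succ_apply] at hs
        exact hs
      refine le_antisymm (Nat.find_le hspec) ?_
      by_contra hlt
      push_neg at hlt
      have hss : x^[Nat.find h' + 1] j = s := by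
        rw [Function.iterate_succ_apply]
        exact Nat.find_spec h'
      exact Nat.find_min h (by omega) hss
    rw [hm, hm', pow_succ]
    ring
  · rw [dif_neg h]
    have h' : ¬ ∃ k, x^[k] (x j) = s := by
      rintro ⟨k, hk⟩
      exact h ⟨k + 1, by rwa [Function.iterate_succ_apply]⟩
    rw [dif_neg h', mul_zero]

lemma hw_le_beta {β : ℝ} (hβ0 : 0 ≤ β) (hβ1 : β ≤ 1) (x : V → V) {s j : V}
    (hj : j ≠ s) : hw β x s j ≤ β := by
  rw [hw_step β x s j hj]
  calc β * hw β x s (x j) ≤ β * 1 :=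
        mul_le_mul_of_nonneg_left (hw_le_one hβ0 hβ1 x s _) hβ0
    _ = β := mul_one β

lemma hw_eq_beta_iff {β : ℝ} (hβ0 : 0 < β) (hβ1 : β < 1) (x : V → V) {s j : V}
    (hj : j ≠ s) : hw β x s j = β ↔ x j = s := by
  constructor
  · intro h
    rw [hw_step β x s j hj] at h
    have h1 : hw β x s (x j) = 1 := by
      have := mul_left_cancel₀ (ne_of_gt hβ0) (h.trans (mul_one β).symm)
      exact this
    by_contra hxj
    have := hw_le_beta hβ0.le hβ1.le x hxj
    rw [h1] at this
    linarith
  · intro h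
    rw [hw_step β x s j hj, h, hw_self, mul_one]

lemma R1_mulVec (y : V → V) (v : V → ℝ) (i : V) : (R1 y).mulVec v i = v (y i) := by
  simp [R1, Matrix.mulVec, dotProduct, ite_mul, one_mul, zero_mul]

lemma det_ne_zero {β : ℝ} (hβ0 : 0 < β) (hβ1 : β < 1) (y : V → V) :
    ((1 : Matrix V V ℝ) - β • (R1 y)ᵀ).det ≠ 0 := by
  have h1 : (1 : Matrix V V ℝ) - β • (R1 y)ᵀ = ((1 : Matrix V V ℝ) - β • R1 y)ᵀ := by
    rw [Matrix.transpose_sub, Matrix.transpose_smul, Matrix.transpose_one]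
  rw [h1, Matrix.det_transpose]
  intro hdet
  obtain ⟨v, hv0, hveq⟩ := (Matrix.exists_mulVec_eq_zero_iff).mpr hdet
  have hvi : ∀ i, v i = β * v (y i) := by
    intro i
    have hc := congrFun hveq i
    have h2 : ((1 : Matrix V V ℝ) - β • R1 y).mulVec v i = v i - β * v (y i) := by
      rw [Matrix.sub_mulVec, Matrix.smul_mulVec, Matrix.one_mulVec]
      simp [R1_mulVec]
    rw [h2] at hc
    have : v i - β * v (y i) = 0 := hc
    linarith
  have hex : ∃ i, v i ≠ 0 := by
    by_contra hc
    push_neg at hc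
    exact hv0 (funext fun i => hc i)
  obtain ⟨i₁, hi₁⟩ := hex
  haveI : Nonempty V := ⟨i₁⟩
  obtain ⟨i₀, hi₀⟩ := Finite.exists_max (fun i => |v i|)
  have hpos : 0 < |v i₀| := lt_of_lt_of_le (abs_pos.mpr hi₁) (hi₀ i₁)
  have heq : |v i₀| = β * |v (y i₀)| := by
    rw [hvi i₀, abs_mul, abs_of_pos hβ0]
  have hle : β * |v (y i₀)| ≤ β * |v i₀| :=
    mul_le_mul_of_nonneg_left (hi₀ (y i₀)) hβ0.le
  nlinarith

lemma util1_update {β : ℝ} (hβ0 : 0 < β) (hβ1 : β < 1) (η : V → ℝ)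
    (x : V → V) (s b : V) (hb : b ≠ s) :
    util1 β η (Function.update x s b) s
      = (1 - β) * ((∑ j, hw β x s j * η j) / (1 - β * hw β x s b)) := by
  classical
  set y := Function.update x s b with hy
  set M : Matrix V V ℝ := 1 - β • (R1 y)ᵀ with hM
  have hdet : M.det ≠ 0 := det_ne_zero hβ0 hβ1 y
  set v : V → ℝ := M⁻¹.mulVec η with hv
  have hMv : M.mulVec v = η := by
    rw [hv, Matrix.mulVec_mulVec, Matrix.mul_nonsing_inv _ (isUnit_iff_ne_zero.mpr hdet),
      Matrix.one_mulVec]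
  have hcomp : ∀ j, η j = v j - β * ∑ i, (if y i = j then v i else 0) := by
    intro j
    have hc := congrFun hMv j
    have e1 : ((R1 y)ᵀ).mulVec v j = ∑ i, (if y i = j then v i else 0) := by
      simp [Matrix.mulVec, dotProduct, R1, Matrix.transpose_apply, ite_mul,
        one_mul, zero_mul]
    have h2 : M.mulVec v j = v j - β * ∑ i, (if y i = j then v i else 0) := by
      rw [hM, Matrix.sub_mulVec, Matrix.smul_mulVec, Matrix.one_mulVec]
      simp [e1]
    rw [h2] at hc
    exact hc.symm
  have key : (1 - β * hw β x s b) * v s = ∑ j, hw β x s j * η j := by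
    have step1 : ∑ j, hw β x s j * η j
        = ∑ j, (hw β x s j * v j - β * ∑ i, (if y i = j then hw β x s j * v i else 0)) := by
      refine Finset.sum_congr rfl fun j _ => ?_
      rw [hcomp j, mul_sub]
      congr 1
      rw [mul_left_comm]
      congr 1
      rw [Finset.mul_sum]
      exact Finset.sum_congr rfl fun i _ => by split <;> ring
    have step2 : ∑ j, (hw β x s j * v j - β * ∑ i, (if y i = j then hw β x s j * v i else 0))
        = ∑ i, (hw β x s i - β * hw β x s (y i)) * v i := by
      rw [Finset.sum_sub_distrib]
      have hsw : ∑ j, ∑ i, (if y i = j then hw β x s j * v i else 0)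
          = ∑ i, hw β x s (y i) * v i := by
        rw [Finset.sum_comm]
        refine Finset.sum_congr rfl fun i _ => ?_
        simp [Finset.sum_ite_eq, eq_comm]
      rw [← Finset.mul_sum, hsw, Finset.mul_sum, ← Finset.sum_sub_distrib]
      refine Finset.sum_congr rfl fun i _ => ?_
      ring
    have step3 : ∑ i, (hw β x s i - β * hw β x s (y i)) * v i
        = (1 - β * hw β x s b) * v s := by
      rw [Finset.sum_eq_single_of_mem s (Finset.mem_univ s)]
      · rw [hy, Function.update_self, hw_self]
      · intro i _ hi
        have hyi : y i = x i := Function.update_of_ne hi b x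
        rw [hyi, ← hw_step β x s i hi]
        ring
    rw [step1, step2, step3]
  have hwb1 : hw β x s b ≤ 1 := hw_le_one hβ0.le hβ1.le x s b
  have hwb0 : 0 ≤ hw β x s b := hw_nonneg hβ0.le x s b
  have hD : 0 < 1 - β * hw β x s b := by nlinarith
  have hvs : v s = (∑ j, hw β x s j * η j) / (1 - β * hw β x s b) := by
    rw [eq_div_iff (ne_of_gt hD)]
    linarith [key]
  show ((1 - β) • (M⁻¹.mulVec η)) s = _
  rw [Pi.smul_apply, smul_eq_mul, ← hv, hvs]

end Aux

/-- in `Γ(V,β,η,1)`, if the in-neighborhood of `s` is nonempty, then the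
best response set of `s` equals its in-neighborhood `N_s^-(x) = {i | i ≠ s ∧ x i = s}`. -/
theorem best_response_eq_in_neighborhood_m1
    {V : Type*} [Fintype V] [DecidableEq V]
    (β : ℝ) (hβ0 : 0 < β) (hβ1 : β < 1)
    (η : V → ℝ) (hη : ∀ i, 0 < η i) (hηsum : ∑ i, η i = 1)
    (x : V → V) (hx : ∀ i, x i ≠ i) (s : V)
    (hne : ∃ i, i ≠ s ∧ x i = s) :
    {a : V | a ≠ s ∧ ∀ b : V, b ≠ s →
        util1 β η (Function.update x s b) s ≤ util1 β η (Function.update x s a) s}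
      = {i : V | i ≠ s ∧ x i = s} := by
  classical
  obtain ⟨i₀, hi₀s, hi₀⟩ := hne
  have hwi₀ : hw β x s i₀ = β := (hw_eq_beta_iff hβ0 hβ1 x hi₀s).mpr hi₀
  set C := ∑ j, hw β x s j * η j with hC
  have hCpos : 0 < C := by
    have hterm : ∀ j ∈ Finset.univ, 0 ≤ hw β x s j * η j := fun j _ =>
      mul_nonneg (hw_nonneg hβ0.le x s j) (hη j).le
    have h1 : hw β x s s * η s ≤ C := Finset.single_le_sum hterm (Finset.mem_univ s)
    have h2 : 0 < hw β x s s * η s := by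
      rw [hw_self]; simpa using hη s
    linarith
  have hK : 0 < (1 - β) * C := mul_pos (by linarith) hCpos
  have hD : ∀ t, 0 < 1 - β * hw β x s t := by
    intro t
    have h1 := hw_le_one hβ0.le hβ1.le x s t
    have h2 := hw_nonneg hβ0.le x s t
    nlinarith
  have hmono : ∀ a b : V, a ≠ s → b ≠ s →
      (util1 β η (Function.update x s b) s ≤ util1 β η (Function.update x s a) s ↔
        hw β x s b ≤ hw β x s a) := by
    intro a b ha hb
    rw [util1_update hβ0 hβ1 η x s a ha, util1_update hβ0 hβ1 η x s b hb,
      ← mul_div_assoc, ← mul_div_assoc,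
      div_le_div_iff₀ (hD b) (hD a)]
    constructor
    · intro h
      nlinarith [mul_pos hK hβ0]
    · intro h
      nlinarith [mul_pos hK hβ0]
  ext a
  simp only [Set.mem_setOf_eq]
  constructor
  · rintro ⟨has, hbr⟩
    refine ⟨has, ?_⟩
    have h1 : hw β x s i₀ ≤ hw β x s a := (hmono a i₀ has hi₀s).mp (hbr i₀ hi₀s)
    have h2 : hw β x s a ≤ β := hw_le_beta hβ0.le hβ1.le x has
    have h3 : hw β x s a = β := le_antisymm h2 (hwi₀.symm.trans_le h1)
    exact (hw_eq_beta_iff hβ0 hβ1 x has).mp h3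
  · rintro ⟨has, hxa⟩
    refine ⟨has, fun b hb => ?_⟩
    rw [hmono a b has hb, (hw_eq_beta_iff hβ0 hβ1 x has).mpr hxa]
    exact hw_le_beta hβ0.le hβ1.le x hb
end

section
/- In the centrality game with m = 1 out-link per node, a strategy profile x is a Nash equilibrium if and only if the graph G(x) is of type C_2^{l,r} for some l, r with 2l + r = n, i.e., G(x) is a disjoint union of l two-cliques together with r singleton nodes of in-degree zero each pointing into one of the two-cliques. -/
open Finset Matrix

/-! ### Auxiliary theory: walk-generating functions -/

/-- Walk generating function: `∑_k β^k [x^[k] i = j]`. -/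
noncomputable def gf {V : Type*} [Fintype V] [DecidableEq V] (β : ℝ) (x : V → V) (i j : V) : ℝ :=
  ∑' k : ℕ, if x^[k] i = j then β ^ k else 0

section AuxTheory
set_option linter.unusedSectionVars false
variable {V : Type*} [Fintype V] [DecidableEq V]
variable {β : ℝ} (hβ0 : 0 < β) (hβ1 : β < 1) (x : V → V)

lemma tsum_shift'' (f : ℕ → ℝ) (hf : Summable f) (t : ℕ) (h0 : ∀ k < t, f k = 0) :
    ∑' k, f k = ∑' k, f (k + t) := by
  rw [← Summable.sum_add_tsum_nat_add t hf]
  rw [Finset.sum_eq_zero (fun k hk => h0 k (Finset.mem_range.mp hk)), zero_add]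

lemma iter_cycle {x : V → V} {s : V} {c : ℕ} (hc : x^[c] s = s) :
    ∀ m, x^[c * m] s = s := by
  intro m; induction m with
  | zero => simp
  | succ m ih => rw [Nat.mul_succ, Function.iterate_add_apply, hc, ih]

lemma iter_eq_dvd {x : V → V} {s : V} {c : ℕ} (hc0 : 0 < c) (hc : x^[c] s = s)
    (hmin : ∀ k, 0 < k → k < c → x^[k] s ≠ s) (k : ℕ) :
    x^[k] s = s ↔ c ∣ k := by
  constructor
  · intro hk
    have h1 : x^[k % c] s = s := by
      have h2 : x^[k % c + c * (k / c)] s = s := by rw [Nat.mod_add_div]; exact hk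
      rwa [Function.iterate_add_apply, iter_cycle hc] at h2
    rcases Nat.eq_zero_or_pos (k % c) with h | h
    · exact Nat.dvd_of_mod_eq_zero h
    · exact absurd h1 (hmin _ h (Nat.mod_lt _ hc0))
  · rintro ⟨m, rfl⟩; exact iter_cycle hc m

lemma traj_agree {x y : V → V} {s i : V} (hagree : ∀ v, v ≠ s → y v = x v) {k : ℕ}
    (h : ∀ j, j < k → x^[j] i ≠ s) : ∀ j, j ≤ k → y^[j] i = x^[j] i := by
  intro j hj
  induction j with
  | zero => rfl
  | succ j ih =>
    rw [Function.iterate_succ_apply', Function.iterate_succ_apply',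
      ih (Nat.le_of_succ_le hj), hagree _ (h j (Nat.lt_of_lt_of_le (Nat.lt_succ_self j) hj))]

/-! ### Matrix part -/

lemma M_mulVec (w : V → ℝ) (s : V) :
    (1 - β • (R1 x)ᵀ).mulVec w s
      = w s - β * ∑ j ∈ Finset.univ.filter (fun j => x j = s), w j := by
  have h1 : ((R1 x)ᵀ).mulVec w s = ∑ j ∈ Finset.univ.filter (fun j => x j = s), w j := by
    simp only [Matrix.mulVec, Matrix.transpose_apply, R1, Matrix.of_apply, dotProduct]
    rw [Finset.sum_filter]
    congr 1; funext j
    split <;> simp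
  simp [Matrix.sub_mulVec, Matrix.smul_mulVec, h1, Matrix.one_mulVec, smul_eq_mul]

lemma no_return_of_no_in {y : V → V} {s : V} (h : ∀ j, y j ≠ s) :
    ∀ k, 0 < k → y^[k] s ≠ s := by
  intro k hk
  obtain ⟨k', rfl⟩ := Nat.exists_eq_succ_of_ne_zero hk.ne'
  rw [Function.iterate_succ_apply']
  exact h _

include hβ0 hβ1

lemma gf_summable' (i j : V) :
    Summable fun k : ℕ => if x^[k] i = j then β ^ k else 0 := by
  apply Summable.of_nonneg_of_le (fun k => ?_) (fun k => ?_)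
    (summable_geometric_of_lt_one hβ0.le hβ1)
  · split <;> positivity
  · split
    · exact le_refl _
    · positivity

/-- the fundamental recursion for gf -/
lemma gf_rec (i s : V) :
    gf β x i s = (if i = s then 1 else 0)
      + β * ∑ l ∈ Finset.univ.filter (fun l => x l = s), gf β x i l := by
  have hsum : ∀ j, Summable fun k : ℕ => if x^[k] i = j then β ^ k else 0 :=
    fun j => gf_summable' hβ0 hβ1 x i j
  have h1 : ∑ l ∈ Finset.univ.filter (fun l => x l = s), gf β x i l
      = ∑' k : ℕ, if x^[k + 1] i = s then β ^ k else 0 := by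
    unfold gf
    rw [← Summable.tsum_finsetSum (fun l _ => hsum l)]
    congr 1; funext k
    rw [Finset.sum_ite_eq (Finset.univ.filter (fun l => x l = s)) (x^[k] i)
      (fun _ => β ^ k)]
    simp [Function.iterate_succ_apply', eq_comm]
  rw [h1]
  have h2 : β * ∑' k : ℕ, (if x^[k + 1] i = s then β ^ k else 0)
      = ∑' k : ℕ, (if x^[k + 1] i = s then β ^ (k + 1) else 0) := by
    rw [← tsum_mul_left]
    congr 1; funext k
    split <;> ring
  rw [h2]
  unfold gf
  rw [Summable.tsum_eq_zero_add (hsum s)]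
  simp

lemma gf_self_no_return {s : V} (h : ∀ k, 0 < k → x^[k] s ≠ s) : gf β x s s = 1 := by
  unfold gf
  have : (fun k : ℕ => if x^[k] s = s then β ^ k else 0)
      = fun k : ℕ => if k = 0 then 1 else 0 := by
    funext k
    match k with
    | 0 => simp
    | k + 1 => rw [if_neg (h (k+1) k.succ_pos), if_neg k.succ_ne_zero]
  rw [this, tsum_ite_eq]

lemma gf_self_cycle {s : V} {c : ℕ} (hc0 : 0 < c) (hc : x^[c] s = s)
    (hmin : ∀ k, 0 < k → k < c → x^[k] s ≠ s) : gf β x s s = (1 - β ^ c)⁻¹ := by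
  unfold gf
  have h1 : (fun k : ℕ => if x^[k] s = s then β ^ k else 0)
      = fun k : ℕ => if c ∣ k then β ^ k else 0 := by
    funext k; simp only [iter_eq_dvd hc0 hc hmin k]
  rw [h1]
  have hinj : Function.Injective (fun m : ℕ => c * m) :=
    fun a b h => Nat.eq_of_mul_eq_mul_left hc0 h
  rw [← Function.Injective.tsum_eq hinj (f := fun k : ℕ => if c ∣ k then β ^ k else 0) ?_]
  · have : (fun m : ℕ => if c ∣ c * m then β ^ (c * m) else 0)
        = fun m : ℕ => (β ^ c) ^ m := by
      funext m; simp [Dvd.intro m rfl, pow_mul]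
    calc ∑' m : ℕ, (if c ∣ c * m then β ^ (c * m) else 0)
        = ∑' m : ℕ, (β ^ c) ^ m := by rw [this]
      _ = (1 - β ^ c)⁻¹ := tsum_geometric_of_lt_one (by positivity)
          (pow_lt_one₀ hβ0.le hβ1 hc0.ne')
  · intro k hk
    simp only [Function.mem_support] at hk
    have : c ∣ k := by by_contra h; simp [h] at hk
    obtain ⟨m, rfl⟩ := this
    exact ⟨m, rfl⟩

lemma gf_hit {i s : V} {t : ℕ} (ht : x^[t] i = s) (hmin : ∀ j, j < t → x^[j] i ≠ s) :
    gf β x i s = β ^ t * gf β x s s := by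
  unfold gf
  rw [tsum_shift'' _ (gf_summable' hβ0 hβ1 x i s) t (fun k hk => by simp [hmin k hk])]
  have : (fun k : ℕ => if x^[k + t] i = s then β ^ (k + t) else 0)
      = fun k : ℕ => β ^ t * (if x^[k] s = s then β ^ k else 0) := by
    funext k
    rw [Function.iterate_add_apply, ht]
    split <;> ring
  rw [this, tsum_mul_left]

lemma gf_no_hit {i s : V} (h : ∀ k, x^[k] i ≠ s) : gf β x i s = 0 := by
  unfold gf
  convert tsum_zero with k
  simp [h k]

lemma gf_ratio (s b i : V) :
    ∃ c : ℝ, 0 ≤ c ∧ (i = s → c = 1) ∧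
      gf β x i s = c * gf β x s s ∧
      gf β (Function.update x s b) i s = c * gf β (Function.update x s b) s s := by
  set x' := Function.update x s b with hx'def
  have hagree : ∀ v, v ≠ s → x' v = x v := fun v hv => Function.update_of_ne hv _ _
  have hagree' : ∀ v, v ≠ s → x v = x' v := fun v hv => (hagree v hv).symm
  by_cases hhit : ∃ k, x^[k] i = s
  · have ht : x^[Nat.find hhit] i = s := Nat.find_spec hhit
    have hmin : ∀ j, j < Nat.find hhit → x^[j] i ≠ s := fun j hj => Nat.find_min hhit hj
    have htraj : ∀ j, j ≤ Nat.find hhit → x'^[j] i = x^[j] i := traj_agree hagree hmin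
    refine ⟨β ^ Nat.find hhit, by positivity, ?_, gf_hit hβ0 hβ1 x ht hmin,
      gf_hit hβ0 hβ1 x' (by rw [htraj _ le_rfl]; exact ht)
        (fun j hj => by rw [htraj j hj.le]; exact hmin j hj)⟩
    intro his
    have h0 : Nat.find hhit = 0 :=
      Nat.eq_zero_of_le_zero (Nat.find_le (by simpa using his))
    simp [h0]
  · have hnohit : ∀ k, x^[k] i ≠ s := by
      intro k hk; exact hhit ⟨k, hk⟩
    have hnohit' : ∀ k, x'^[k] i ≠ s := by
      intro k hk
      have hex : ∃ k, x'^[k] i = s := ⟨k, hk⟩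
      have ht' : x'^[Nat.find hex] i = s := Nat.find_spec hex
      have hmin' : ∀ j, j < Nat.find hex → x'^[j] i ≠ s := fun j hj => Nat.find_min hex hj
      have := traj_agree hagree' hmin' (Nat.find hex) le_rfl
      exact hnohit _ (this.trans ht')
    refine ⟨0, le_rfl, ?_, ?_, ?_⟩
    · intro his; exact absurd (his ▸ rfl : x^[0] i = s) (hnohit 0)
    · rw [gf_no_hit hβ0 hβ1 x hnohit]; ring
    · rw [gf_no_hit hβ0 hβ1 x' hnohit']; ring

lemma M_det_ne_zero : (1 - β • (R1 x)ᵀ).det ≠ 0 := by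
  intro hdet
  obtain ⟨v, hv0, hv⟩ := (Matrix.exists_mulVec_eq_zero_iff).mpr hdet
  have hveq : ∀ s, v s = β * ∑ j ∈ Finset.univ.filter (fun j => x j = s), v j := by
    intro s
    have := congrFun hv s
    rw [M_mulVec] at this
    simp at this
    linarith [this]
  have hsum : ∑ s, |v s| ≤ β * ∑ s, |v s| := by
    calc ∑ s, |v s| = ∑ s, |β * ∑ j ∈ Finset.univ.filter (fun j => x j = s), v j| := by
          simp_rw [← hveq]
      _ ≤ ∑ s, β * ∑ j ∈ Finset.univ.filter (fun j => x j = s), |v j| := by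
          apply Finset.sum_le_sum; intro s _
          rw [abs_mul, abs_of_pos hβ0]
          exact mul_le_mul_of_nonneg_left (Finset.abs_sum_le_sum_abs _ _) hβ0.le
      _ = β * ∑ s, ∑ j ∈ Finset.univ.filter (fun j => x j = s), |v j| := by
          rw [Finset.mul_sum]
      _ = β * ∑ j, |v j| := by
          rw [Finset.sum_fiberwise_eq_sum_filter Finset.univ Finset.univ x (fun j => |v j|)]
          simp
  have hpos : ∑ s, |v s| ≤ 0 := by nlinarith
  have hz : ∀ s, v s = 0 := by
    intro s
    have h1 : 0 ≤ ∑ s, |v s| := Finset.sum_nonneg (fun s _ => abs_nonneg _)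
    have h2 : ∑ s, |v s| = 0 := le_antisymm hpos h1
    have := (Finset.sum_eq_zero_iff_of_nonneg
      (fun s _ => abs_nonneg (v s))).mp h2 s (Finset.mem_univ s)
    exact abs_eq_zero.mp this
  exact hv0 (funext hz)

lemma util1_eq_of_solves (η : V → ℝ) (w : V → ℝ)
    (hw : (1 - β • (R1 x)ᵀ).mulVec w = (1 - β) • η) :
    ∀ s, util1 β η x s = w s := by
  intro s
  have hu : IsUnit (1 - β • (R1 x)ᵀ).det := (M_det_ne_zero hβ0 hβ1 x).isUnit
  have hww : ((1 - β • (R1 x)ᵀ)⁻¹).mulVec ((1 - β • (R1 x)ᵀ).mulVec w) = w := by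
    rw [Matrix.mulVec_mulVec, Matrix.nonsing_inv_mul _ hu, Matrix.one_mulVec]
  rw [hw] at hww
  have h2 : ((1 - β • (R1 x)ᵀ)⁻¹).mulVec ((1 - β) • η)
      = (1 - β) • ((1 - β • (R1 x)ᵀ)⁻¹).mulVec η := by
    rw [Matrix.mulVec_smul]
  rw [h2] at hww
  unfold util1
  rw [← hww]

lemma util1_gf (η : V → ℝ) (s : V) :
    util1 β η x s = (1 - β) * ∑ i, η i * gf β x i s := by
  apply util1_eq_of_solves hβ0 hβ1 x η (fun s => (1 - β) * ∑ i, η i * gf β x i s)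
  funext s
  rw [M_mulVec]
  have h1 : ∑ j ∈ Finset.univ.filter (fun j => x j = s),
        ((1 - β) * ∑ i, η i * gf β x i j)
      = (1 - β) * ∑ i, η i * ∑ j ∈ Finset.univ.filter (fun j => x j = s), gf β x i j := by
    rw [← Finset.mul_sum]
    congr 1
    rw [Finset.sum_comm]
    exact Finset.sum_congr rfl fun i _ => (Finset.mul_sum _ _ _).symm
  rw [h1]
  have key : (∑ i, η i * gf β x i s)
      - β * ∑ i, η i * ∑ j ∈ Finset.univ.filter (fun j => x j = s), gf β x i j = η s := by
    rw [Finset.mul_sum, ← Finset.sum_sub_distrib]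
    have h2 : ∀ i ∈ Finset.univ,
        η i * gf β x i s
          - β * (η i * ∑ j ∈ Finset.univ.filter (fun j => x j = s), gf β x i j)
        = if i = s then η i else 0 := by
      intro i _
      rw [gf_rec hβ0 hβ1 x i s]
      split <;> ring
    rw [Finset.sum_congr rfl h2]
    simp
  have h3 : (1 - β) * (∑ i, η i * gf β x i s)
      - β * ((1 - β) * ∑ i, η i * ∑ j ∈ Finset.univ.filter (fun j => x j = s), gf β x i j)
      = (1 - β) * ((∑ i, η i * gf β x i s)
        - β * ∑ i, η i * ∑ j ∈ Finset.univ.filter (fun j => x j = s), gf β x i j) := by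
    ring
  rw [h3, key]
  rfl

lemma util1_compare (η : V → ℝ) (hη : ∀ i, 0 < η i) (s b : V) :
    ∃ A : ℝ, 0 < A ∧ util1 β η x s = (1 - β) * (A * gf β x s s) ∧
      util1 β η (Function.update x s b) s
        = (1 - β) * (A * gf β (Function.update x s b) s s) := by
  have hratio := fun i => gf_ratio hβ0 hβ1 x s b i
  choose c hc0 hc1 hcx hcx' using hratio
  refine ⟨∑ i, η i * c i, ?_, ?_, ?_⟩
  · apply Finset.sum_pos' (fun i _ => mul_nonneg (hη i).le (hc0 i))
    exact ⟨s, Finset.mem_univ s, by rw [hc1 s rfl, mul_one]; exact hη s⟩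
  · rw [util1_gf hβ0 hβ1 x η s]
    congr 1
    rw [Finset.sum_mul]
    exact Finset.sum_congr rfl fun i _ => by rw [hcx i, mul_assoc]
  · rw [util1_gf hβ0 hβ1 (Function.update x s b) η s]
    congr 1
    rw [Finset.sum_mul]
    exact Finset.sum_congr rfl fun i _ => by rw [hcx' i, mul_assoc]

/-! ### Values of `gf y s s` -/

lemma gss_two_cycle {y : V → V} {s : V} (h1 : y s ≠ s) (h2 : y (y s) = s) :
    gf β y s s = (1 - β ^ 2)⁻¹ := by
  apply gf_self_cycle hβ0 hβ1 y (by norm_num : (0:ℕ) < 2)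
  · show y^[2] s = s
    rw [show (2:ℕ) = 1 + 1 from rfl, Function.iterate_add_apply]
    simpa using h2
  · intro k hk1 hk2
    interval_cases k
    simpa using h1

lemma gss_upper {y : V → V} {s : V} (h1 : y s ≠ s) :
    gf β y s s ≤ (1 - β ^ 2)⁻¹ := by
  have hb2 : 0 < 1 - β ^ 2 := by nlinarith
  by_cases hret : ∃ k, 0 < k ∧ y^[k] s = s
  · have hc := Nat.find_spec hret
    have hmin : ∀ k, 0 < k → k < Nat.find hret → y^[k] s ≠ s := by
      intro k hk hlt hks
      exact Nat.find_min hret hlt ⟨hk, hks⟩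
    have hc2 : 2 ≤ Nat.find hret := by
      rcases Nat.lt_or_ge (Nat.find hret) 2 with h | h
      · interval_cases hval : Nat.find hret
        · exact absurd hc.1 (by simp [hval])
        · exact absurd hc.2 (by simpa using h1)
      · exact h
    rw [gf_self_cycle hβ0 hβ1 y hc.1 hc.2 hmin]
    apply inv_anti₀ hb2
    have : β ^ Nat.find hret ≤ β ^ 2 := pow_le_pow_of_le_one hβ0.le hβ1.le hc2
    linarith
  · push_neg at hret
    rw [gf_self_no_return hβ0 hβ1 y (fun k hk => hret k hk)]
    calc (1:ℝ) = 1⁻¹ := by norm_num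
      _ ≤ (1 - β ^ 2)⁻¹ := by
          apply inv_anti₀ hb2
          nlinarith

lemma gss_upper_strict {y : V → V} {s : V} (h1 : y s ≠ s) (h2 : y (y s) ≠ s) :
    gf β y s s < (1 - β ^ 2)⁻¹ := by
  have hb2 : 0 < 1 - β ^ 2 := by nlinarith
  by_cases hret : ∃ k, 0 < k ∧ y^[k] s = s
  · have hc := Nat.find_spec hret
    have hmin : ∀ k, 0 < k → k < Nat.find hret → y^[k] s ≠ s := by
      intro k hk hlt hks
      exact Nat.find_min hret hlt ⟨hk, hks⟩
    have hc3 : 3 ≤ Nat.find hret := by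
      rcases Nat.lt_or_ge (Nat.find hret) 3 with h | h
      · interval_cases hval : Nat.find hret
        · exact absurd hc.1 (by simp [hval])
        · exact absurd hc.2 (by simpa using h1)
        · refine absurd hc.2 ?_
          show y^[2] s ≠ s
          rw [show (2:ℕ) = 1 + 1 from rfl, Function.iterate_add_apply]
          simpa using h2
      · exact h
    rw [gf_self_cycle hβ0 hβ1 y hc.1 hc.2 hmin]
    apply inv_strictAnti₀ hb2
    have : β ^ Nat.find hret < β ^ 2 :=
      pow_lt_pow_right_of_lt_one₀ hβ0 hβ1 (by omega)
    linarith
  · push_neg at hret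
    rw [gf_self_no_return hβ0 hβ1 y (fun k hk => hret k hk)]
    calc (1:ℝ) = 1⁻¹ := by norm_num
      _ < (1 - β ^ 2)⁻¹ := by
          apply inv_strictAnti₀ hb2
          nlinarith

end AuxTheory

/-- in `Γ(V,β,η,1)`, a profile `x` is a Nash equilibrium iff the formed
graph is of type `C_2^{l,r}`: every node either belongs to a 2-clique, or has zero
in-degree and points to a node belonging to a 2-clique. -/
theorem nash_iff_C2lr_m1
    {V : Type*} [Fintype V] [DecidableEq V]
    (β : ℝ) (hβ0 : 0 < β) (hβ1 : β < 1)
    (η : V → ℝ) (hη : ∀ i, 0 < η i) (hηsum : ∑ i, η i = 1)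
    (x : V → V) (hx : ∀ i, x i ≠ i) :
    (∀ s b, b ≠ s → util1 β η (Function.update x s b) s ≤ util1 β η x s)
      ↔ (∀ i, x (x i) = i ∨ ((∀ j, x j ≠ i) ∧ x (x (x i)) = x i)) := by
  have h1β : 0 < 1 - β := by linarith
  constructor
  · intro hnash
    have claim : ∀ s j, x j = s → x (x s) = s := by
      intro s j hj
      by_contra hne
      have hjs : j ≠ s := by
        intro h; apply hx s; rw [← h] at hj ⊢; exact hj
      obtain ⟨A, hA, hu, hu'⟩ := util1_compare hβ0 hβ1 x η hη s j
      have hg' : gf β (Function.update x s j) s s = (1 - β ^ 2)⁻¹ := by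
        apply gss_two_cycle hβ0 hβ1
        · rw [Function.update_self]; exact hjs
        · rw [Function.update_self, Function.update_of_ne hjs]; exact hj
      have hgless : gf β x s s < (1 - β ^ 2)⁻¹ :=
        gss_upper_strict hβ0 hβ1 (hx s) hne
      have hle := hnash s j hjs
      rw [hu, hu'] at hle
      have hgle : gf β (Function.update x s j) s s ≤ gf β x s s := by
        nlinarith [mul_pos h1β hA]
      rw [hg'] at hgle
      linarith
    intro i
    by_cases hin : ∃ j, x j = i
    · exact Or.inl (claim i hin.choose hin.choose_spec)
    · push_neg at hin
      exact Or.inr ⟨hin, claim (x i) i rfl⟩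
  · intro hC s b hbs
    obtain ⟨A, hA, hu, hu'⟩ := util1_compare hβ0 hβ1 x η hη s b
    rw [hu, hu']
    have hgle : gf β (Function.update x s b) s s ≤ gf β x s s := by
      rcases hC s with h2 | ⟨hind, _⟩
      · rw [gss_two_cycle hβ0 hβ1 (hx s) h2]
        apply gss_upper hβ0 hβ1
        rw [Function.update_self]; exact hbs
      · have g1 : gf β x s s = 1 :=
          gf_self_no_return hβ0 hβ1 x (no_return_of_no_in hind)
        have g2 : gf β (Function.update x s b) s s = 1 := by
          apply gf_self_no_return hβ0 hβ1
          apply no_return_of_no_in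
          intro j
          by_cases hjs : j = s
          · rw [hjs, Function.update_self]; exact hbs
          · rw [Function.update_of_ne hjs]; exact hind j
        rw [g1, g2]
    nlinarith [mul_pos h1β hA]
end

section
/- In the centrality game with m = 1 and n even, the limit set N* of the best response dynamics coincides with the set of strict Nash equilibria, namely the profiles whose graph is a disjoint union of n/2 two-cliques. -/
open Finset Matrix

/-- Best response set of player `s` at profile `x` in `Γ(V, β, η, 1)`. -/
def br1 {V : Type*} [Fintype V] [DecidableEq V]
    (β : ℝ) (η : V → ℝ) (x : V → V) (s : V) : Set V :=
  {a : V | a ≠ s ∧ ∀ b : V, b ≠ s →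
    util1 β η (Function.update x s b) s ≤ util1 β η (Function.update x s a) s}

/-- One step of the asynchronous best response dynamics: some player `s` revises its
action to some element of its best response set. -/
def step1 {V : Type*} [Fintype V] [DecidableEq V]
    (β : ℝ) (η : V → ℝ) (x y : V → V) : Prop :=
  ∃ s a, a ∈ br1 β η x s ∧ y = Function.update x s a

set_option linter.unusedSectionVars false
set_option linter.unusedVariables false
set_option maxHeartbeats 1000000

namespace BR
open scoped Classical
variable {V : Type*} [Fintype V] [DecidableEq V] {β : ℝ}

noncomputable def wf (β : ℝ) (y : V → V) (i j : V) : ℝ :=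
  ∑' k : ℕ, β ^ k * (if y^[k] i = j then (1:ℝ) else 0)

variable {β : ℝ}

lemma wf_summable (hβ0 : 0 < β) (hβ1 : β < 1) (y : V → V) (i j : V) :
    Summable (fun k : ℕ => β ^ k * (if y^[k] i = j then (1:ℝ) else 0)) := by
  refine Summable.of_nonneg_of_le (fun k => ?_) (fun k => ?_)
    (summable_geometric_of_lt_one hβ0.le hβ1)
  · have := pow_nonneg hβ0.le k; split <;> simp [this]
  · have := pow_nonneg hβ0.le k
    refine mul_le_of_le_one_right this ?_
    split <;> norm_num

lemma wf_nonneg (hβ0 : 0 < β) (y : V → V) (i j : V) : 0 ≤ wf β y i j := by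
  refine tsum_nonneg (fun k => ?_)
  have := pow_nonneg hβ0.le k; split <;> simp [this]

lemma wf_rec (hβ0 : 0 < β) (hβ1 : β < 1) (y : V → V) (i j : V) :
    wf β y i j = (if i = j then 1 else 0)
      + β * ∑ t ∈ univ.filter (fun t => y t = j), wf β y i t := by
  have hs := wf_summable hβ0 hβ1 y i j
  rw [wf, Summable.tsum_eq_zero_add hs]
  congr 1
  · simp; congr
  have h1 : ∀ k : ℕ, β ^ (k+1) * (if y^[k+1] i = j then (1:ℝ) else 0)
      = ∑ t ∈ univ.filter (fun t => y t = j), β * (β ^ k * (if y^[k] i = t then 1 else 0)) := by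
    intro k
    by_cases hmem : y (y^[k] i) = j
    · rw [Finset.sum_eq_single_of_mem (y^[k] i) (by simp [hmem])]
      · simp [Function.iterate_succ_apply', hmem]; ring
      · intro t ht hne
        simp [Ne.symm hne]
    · rw [Finset.sum_eq_zero]
      · simp [Function.iterate_succ_apply', hmem]
      · intro t ht
        have htj : y t = j := (Finset.mem_filter.mp ht).2
        have : y^[k] i ≠ t := fun h => hmem (h ▸ htj)
        simp [this]
  calc (∑' k : ℕ, β ^ (k+1) * (if y^[k+1] i = j then (1:ℝ) else 0))
      = ∑' k : ℕ, ∑ t ∈ univ.filter (fun t => y t = j),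
          β * (β ^ k * (if y^[k] i = t then (1:ℝ) else 0)) := tsum_congr h1
    _ = ∑ t ∈ univ.filter (fun t => y t = j),
          ∑' k : ℕ, β * (β ^ k * (if y^[k] i = t then (1:ℝ) else 0)) :=
        Summable.tsum_finsetSum (fun t _ => (wf_summable hβ0 hβ1 y i t).mul_left β)
    _ = β * ∑ t ∈ univ.filter (fun t => y t = j), wf β y i t := by
        rw [Finset.mul_sum]
        refine Finset.sum_congr rfl (fun t _ => ?_)
        rw [tsum_mul_left]; rfl


lemma det_unit (hβ0 : 0 < β) (hβ1 : β < 1) (y : V → V) :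
    IsUnit ((1 : Matrix V V ℝ) - β • (R1 y)ᵀ).det := by
  rw [isUnit_iff_ne_zero]
  have htr : ((1 : Matrix V V ℝ) - β • (R1 y)ᵀ) = ((1 : Matrix V V ℝ) - β • (R1 y))ᵀ := by
    rw [Matrix.transpose_sub, Matrix.transpose_smul, Matrix.transpose_one]
  rw [htr, Matrix.det_transpose]
  intro h0
  obtain ⟨v, hv0, hv⟩ := (Matrix.exists_mulVec_eq_zero_iff).mpr h0
  have key : ∀ i, v i = β * v (y i) := by
    intro i
    have h := congrFun hv i
    have hRv : (R1 y).mulVec v i = v (y i) := by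
      simp only [Matrix.mulVec, dotProduct, R1, Matrix.of_apply]
      rw [Finset.sum_eq_single (y i)] <;> simp +contextual [eq_comm]
    simp only [Matrix.sub_mulVec, Matrix.smul_mulVec, Matrix.one_mulVec,
      Pi.sub_apply, Pi.smul_apply, smul_eq_mul, hRv, Pi.zero_apply] at h
    linarith
  obtain ⟨j, hj⟩ := Function.ne_iff.mp hv0
  obtain ⟨i₀, -, hmax⟩ := Finset.exists_max_image Finset.univ (fun i => |v i|)
    ⟨j, Finset.mem_univ _⟩
  have hpos : 0 < |v i₀| := lt_of_lt_of_le (abs_pos.mpr hj) (hmax j (Finset.mem_univ _))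
  have h1 : |v i₀| = β * |v (y i₀)| := by rw [key i₀, abs_mul, abs_of_pos hβ0]
  have h2 : |v (y i₀)| ≤ |v i₀| := hmax _ (Finset.mem_univ _)
  nlinarith


lemma util_eq (hβ0 : 0 < β) (hβ1 : β < 1) (η : V → ℝ) (y : V → V) (s : V) :
    util1 β η y s = (1 - β) * ∑ i, η i * wf β y i s := by
  set M := (1 : Matrix V V ℝ) - β • (R1 y)ᵀ with hM
  have hdet := det_unit hβ0 hβ1 y
  set c : V → ℝ := fun j => (1 - β) * ∑ i, η i * wf β y i j with hc
  have hRc : ∀ j, ((R1 y)ᵀ).mulVec c j = ∑ t ∈ univ.filter (fun t => y t = j), c t := by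
    intro j
    simp only [Matrix.mulVec, dotProduct, Matrix.transpose_apply, R1, Matrix.of_apply]
    rw [Finset.sum_filter]
    refine Finset.sum_congr rfl (fun t _ => ?_)
    split <;> simp
  have expand : ∀ j, c j = (1 - β) * η j + β * ∑ t ∈ univ.filter (fun t => y t = j), c t := by
    intro j
    have e1 : c j = (1 - β) * ∑ i, η i *
        ((if i = j then 1 else 0) + β * ∑ t ∈ univ.filter (fun t => y t = j), wf β y i t) := by
      simp only [hc]
      congr 1
      exact Finset.sum_congr rfl (fun i _ => by rw [← wf_rec hβ0 hβ1])
    have e2 : (∑ i, η i * (if i = j then (1:ℝ) else 0)) = η j := by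
      simp
    have e3 : (∑ i, η i * (β * ∑ t ∈ univ.filter (fun t => y t = j), wf β y i t))
        = β * ∑ t ∈ univ.filter (fun t => y t = j), ∑ i, η i * wf β y i t := by
      simp only [Finset.mul_sum]
      rw [Finset.sum_comm]
      exact Finset.sum_congr rfl fun t _ => Finset.sum_congr rfl fun i _ => by ring
    rw [e1, Finset.sum_congr rfl (fun i (_ : i ∈ univ) => mul_add (η i)
      (if i = j then (1:ℝ) else 0) (β * ∑ t ∈ univ.filter (fun t => y t = j), wf β y i t)),
      Finset.sum_add_distrib, e2, e3]
    simp only [hc]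
    rw [← Finset.mul_sum]
    ring
  have hMc : M.mulVec c = (1 - β) • η := by
    funext j
    have h1 : M.mulVec c j = c j - β * ((R1 y)ᵀ.mulVec c j) := by
      simp [hM, Matrix.sub_mulVec, Matrix.smul_mulVec, Matrix.one_mulVec]
    rw [h1, hRc, expand]
    simp only [Pi.smul_apply, smul_eq_mul]
    ring
  have hcinv : c = (M⁻¹).mulVec ((1 - β) • η) := by
    rw [← hMc, Matrix.mulVec_mulVec, Matrix.nonsing_inv_mul _ hdet, Matrix.one_mulVec]
  have h2 : util1 β η y s = ((M⁻¹).mulVec ((1 - β) • η)) s := by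
    rw [util1, Matrix.mulVec_smul]
  rw [h2, ← hcinv]


lemma wf_hit (hβ0 : 0 < β) (hβ1 : β < 1) (y : V → V) (i s : V) (d : ℕ)
    (hd : y^[d] i = s) (hmin : ∀ k < d, y^[k] i ≠ s) :
    wf β y i s = β ^ d * wf β y s s := by
  have hs := wf_summable hβ0 hβ1 y i s
  rw [wf, ← Summable.sum_add_tsum_nat_add d hs,
    Finset.sum_eq_zero (fun k hk => by simp [hmin k (Finset.mem_range.mp hk)]), zero_add]
  have h1 : ∀ k : ℕ, β ^ (k + d) * (if y^[k + d] i = s then (1:ℝ) else 0)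
      = β ^ d * (β ^ k * (if y^[k] s = s then 1 else 0)) := by
    intro k
    rw [Function.iterate_add_apply, hd, pow_add]
    ring
  rw [tsum_congr h1, tsum_mul_left]
  rfl

lemma wf_no_hit (y : V → V) (i s : V) (h : ∀ k, y^[k] i ≠ s) : wf β y i s = 0 := by
  simp [wf, h]

lemma wf_self_no_return (hβ0 : 0 < β) (hβ1 : β < 1) (y : V → V) (s : V)
    (h : ∀ k, 0 < k → y^[k] s ≠ s) : wf β y s s = 1 := by
  rw [wf, Summable.tsum_eq_zero_add (wf_summable hβ0 hβ1 y s s)]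
  have : ∀ k : ℕ, β ^ (k + 1) * (if y^[k + 1] s = s then (1:ℝ) else 0) = 0 := by
    intro k; rw [if_neg (h (k + 1) (Nat.succ_pos k)), mul_zero]
  rw [tsum_congr this, tsum_zero]
  simp

lemma wf_self_return (hβ0 : 0 < β) (hβ1 : β < 1) (y : V → V) (s : V) (L : ℕ)
    (hL : 0 < L) (hret : y^[L] s = s) (hmin : ∀ k, 0 < k → k < L → y^[k] s ≠ s) :
    wf β y s s = (1 - β ^ L)⁻¹ := by
  have hdvd : ∀ k : ℕ, y^[k] s = s ↔ L ∣ k := by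
    intro k
    constructor
    · intro hk
      have hmul : ∀ q : ℕ, y^[L * q] s = s := by
        intro q
        rw [Function.iterate_mul]
        exact Function.iterate_fixed hret q
      have hr : y^[k % L] s = s := by
        conv at hk => rw [← Nat.div_add_mod k L]
        rw [add_comm, Function.iterate_add_apply, hmul] at hk
        exact hk
      by_contra hnd
      have hrpos : 0 < k % L := by
        rcases Nat.eq_zero_or_pos (k % L) with h0 | h0
        · exact absurd (Nat.dvd_of_mod_eq_zero h0) hnd
        · exact h0
      exact hmin _ hrpos (Nat.mod_lt _ hL) hr
    · rintro ⟨q, rfl⟩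
      rw [Function.iterate_mul]
      exact Function.iterate_fixed hret q
  have hinj : Function.Injective (fun m : ℕ => L * m) :=
    fun a b hab => Nat.eq_of_mul_eq_mul_left hL hab
  have hsupp : Function.support
      (fun k : ℕ => β ^ k * (if y^[k] s = s then (1:ℝ) else 0)) ⊆
      Set.range (fun m : ℕ => L * m) := by
    intro k hk
    have : y^[k] s = s := by
      by_contra hc
      simp [hc] at hk
    obtain ⟨q, hq⟩ := (hdvd k).mp this
    exact ⟨q, hq.symm⟩
  have h1 : wf β y s s = ∑' m : ℕ, β ^ (L * m) := by
    rw [wf, ← Function.Injective.tsum_eq hinj hsupp]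
    refine tsum_congr (fun m => ?_)
    have : y^[L * m] s = s := (hdvd _).mpr ⟨m, rfl⟩
    simp [this]
  rw [h1]
  have h2 : ∀ m : ℕ, β ^ (L * m) = (β ^ L) ^ m := fun m => by rw [← pow_mul]
  rw [tsum_congr h2, tsum_geometric_of_lt_one (pow_nonneg hβ0.le L)
    (pow_lt_one₀ hβ0.le hβ1 hL.ne')]


lemma agree_iter (x y : V → V) (s : V) (h : ∀ j, j ≠ s → y j = x j) (i : V) (d : ℕ)
    (hd : y^[d] i = s) (hmin : ∀ k < d, y^[k] i ≠ s) :
    x^[d] i = s ∧ ∀ k < d, x^[k] i ≠ s := by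
  have key : ∀ k ≤ d, x^[k] i = y^[k] i := by
    intro k hk
    induction k with
    | zero => rfl
    | succ n ih =>
      have hn : n < d := lt_of_lt_of_le (Nat.lt_succ_self n) hk
      rw [Function.iterate_succ_apply', Function.iterate_succ_apply',
        ih hn.le, ← h _ (hmin n hn)]
  exact ⟨(key d le_rfl).trans hd, fun k hk => by rw [key k hk.le]; exact hmin k hk⟩

lemma exists_hit_congr (x y : V → V) (s : V) (h : ∀ j, j ≠ s → y j = x j) (i : V)
    (hy : ∃ k, y^[k] i = s) : ∃ k, x^[k] i = s :=
  ⟨Nat.find hy, (agree_iter x y s h i (Nat.find hy) (Nat.find_spec hy)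
    (fun k hk => Nat.find_min hy hk)).1⟩

lemma find_hit_congr (x y : V → V) (s : V) (h : ∀ j, j ≠ s → y j = x j) (i : V)
    (hy : ∃ k, y^[k] i = s) (hx : ∃ k, x^[k] i = s) :
    Nat.find hy = Nat.find hx := by
  have h' : ∀ j, j ≠ s → x j = y j := fun j hj => (h j hj).symm
  have h1 := agree_iter x y s h i (Nat.find hy) (Nat.find_spec hy)
    (fun k hk => Nat.find_min hy hk)
  have h2 := agree_iter y x s h' i (Nat.find hx) (Nat.find_spec hx)
    (fun k hk => Nat.find_min hx hk)
  exact le_antisymm (Nat.find_le h2.1) (Nat.find_le h1.1)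

/-- Hitting coefficient of `i` towards `s` (independent of the action of `s`). -/
noncomputable def rho (β : ℝ) (x : V → V) (s i : V) : ℝ :=
  if h : ∃ k, (Function.update x s s)^[k] i = s then β ^ (Nat.find h) else 0

/-- Return-time factor of `s` when it points at `b`. -/
noncomputable def Wv (β : ℝ) (x : V → V) (s b : V) : ℝ :=
  if h : ∃ k, (Function.update x s s)^[k] b = s then (1 - β ^ (Nat.find h + 1))⁻¹ else 1

lemma util_update (hβ0 : 0 < β) (hβ1 : β < 1) (η : V → ℝ) (x : V → V) (s b : V)
    (hb : b ≠ s) :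
    util1 β η (Function.update x s b) s
      = (1 - β) * (∑ i, η i * rho β x s i) * Wv β x s b := by
  set y := Function.update x s b with hy
  set x' := Function.update x s s with hx'
  have hagree : ∀ j, j ≠ s → y j = x' j := fun j hj => by
    rw [hy, hx', Function.update_of_ne hj, Function.update_of_ne hj]
  have hagree' : ∀ j, j ≠ s → x' j = y j := fun j hj => (hagree j hj).symm
  have hys : y s = b := Function.update_self s b x
  have hwf : ∀ i, wf β y i s = rho β x s i * wf β y s s := by
    intro i
    by_cases h : ∃ k, x'^[k] i = s
    · have hyex : ∃ k, y^[k] i = s := exists_hit_congr y x' s hagree' i h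
      rw [wf_hit hβ0 hβ1 y i s (Nat.find hyex) (Nat.find_spec hyex)
        (fun k hk => Nat.find_min hyex hk), rho, dif_pos h,
        find_hit_congr x' y s hagree i hyex h]
    · have hynone : ∀ k, y^[k] i ≠ s := by
        intro k hk
        exact h (exists_hit_congr x' y s hagree i ⟨k, hk⟩)
      rw [wf_no_hit y i s hynone, rho, dif_neg h, zero_mul]
  have hW : wf β y s s = Wv β x s b := by
    by_cases h : ∃ k, x'^[k] b = s
    · have hyb : ∃ k, y^[k] b = s := exists_hit_congr y x' s hagree' b h
      have hfind : Nat.find hyb = Nat.find h := find_hit_congr x' y s hagree b hyb h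
      have hret : y^[Nat.find hyb + 1] s = s := by
        rw [Function.iterate_succ_apply, hys]
        exact Nat.find_spec hyb
      have hminret : ∀ k, 0 < k → k < Nat.find hyb + 1 → y^[k] s ≠ s := by
        intro k hk0 hkm hkeq
        obtain ⟨k', rfl⟩ : ∃ k', k = k' + 1 := ⟨k - 1, (Nat.succ_pred_eq_of_pos hk0).symm⟩
        rw [Function.iterate_succ_apply, hys] at hkeq
        exact Nat.find_min hyb (by omega) hkeq
      rw [wf_self_return hβ0 hβ1 y s (Nat.find hyb + 1) (Nat.succ_pos _) hret hminret,
        Wv, dif_pos h, hfind]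
    · have hno : ∀ k, 0 < k → y^[k] s ≠ s := by
        intro k hk0 hkeq
        obtain ⟨k', rfl⟩ : ∃ k', k = k' + 1 := ⟨k - 1, (Nat.succ_pred_eq_of_pos hk0).symm⟩
        rw [Function.iterate_succ_apply, hys] at hkeq
        exact h (exists_hit_congr x' y s hagree b ⟨k', hkeq⟩)
      rw [wf_self_no_return hβ0 hβ1 y s hno, Wv, dif_neg h]
  rw [util_eq hβ0 hβ1 η y s]
  have : (∑ i, η i * wf β y i s) = (∑ i, η i * rho β x s i) * wf β y s s := by
    rw [Finset.sum_mul]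
    exact Finset.sum_congr rfl (fun i _ => by rw [hwf i]; ring)
  rw [this, hW, mul_assoc]

lemma rho_nonneg (hβ0 : 0 < β) (x : V → V) (s i : V) : 0 ≤ rho β x s i := by
  rw [rho]; split
  · exact pow_nonneg hβ0.le _
  · exact le_refl 0

lemma sum_rho_pos (hβ0 : 0 < β) (η : V → ℝ) (hη : ∀ i, 0 < η i) (x : V → V) (s : V) :
    0 < ∑ i, η i * rho β x s i := by
  refine Finset.sum_pos' (fun i _ => mul_nonneg (hη i).le (rho_nonneg hβ0 x s i))
    ⟨s, Finset.mem_univ s, ?_⟩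
  have h : ∃ k, (Function.update x s s)^[k] s = s := ⟨0, rfl⟩
  have hfind : Nat.find h = 0 := Nat.find_eq_zero h |>.mpr rfl
  rw [rho, dif_pos h, hfind, pow_zero, mul_one]
  exact hη s

lemma Wv_in (x : V → V) (s b : V) (hb : b ≠ s) (hxb : x b = s) :
    Wv β x s b = (1 - β ^ 2)⁻¹ := by
  have h : ∃ k, (Function.update x s s)^[k] b = s :=
    ⟨1, by rw [Function.iterate_one, Function.update_of_ne hb, hxb]⟩
  have hfind : Nat.find h = 1 := by
    rw [Nat.find_eq_iff]
    refine ⟨by rw [Function.iterate_one, Function.update_of_ne hb, hxb], ?_⟩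
    intro k hk
    interval_cases k
    simpa using hb
  rw [Wv, dif_pos h, hfind]

lemma Wv_lt_of_not_in (hβ0 : 0 < β) (hβ1 : β < 1) (x : V → V) (s b : V) (hb : b ≠ s)
    (hxb : x b ≠ s) : Wv β x s b < (1 - β ^ 2)⁻¹ := by
  have hb2 : 0 < 1 - β ^ 2 := by nlinarith
  by_cases h : ∃ k, (Function.update x s s)^[k] b = s
  · have h0 : Nat.find h ≠ 0 := by
      intro h0
      exact hb (by simpa using Nat.find_eq_zero h |>.mp h0)
    have h1 : Nat.find h ≠ 1 := by
      intro h1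
      have := Nat.find_spec h
      rw [h1, Function.iterate_one, Function.update_of_ne hb] at this
      exact hxb this
    have h2 : 2 < Nat.find h + 1 := by omega
    have hpow : β ^ (Nat.find h + 1) < β ^ 2 := pow_lt_pow_right_of_lt_one₀ hβ0 hβ1 h2
    rw [Wv, dif_pos h]
    exact inv_strictAnti₀ hb2 (by linarith)
  · rw [Wv, dif_neg h]
    have hlt : 1 - β ^ 2 < 1 := by nlinarith
    have := inv_strictAnti₀ hb2 hlt
    simpa using this

lemma no_reach_of_no_inlink (x : V → V) (s : V) (h : ∀ t, t ≠ s → x t ≠ s) (b : V)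
    (hb : b ≠ s) : ¬ ∃ k, (Function.update x s s)^[k] b = s := by
  set x' := Function.update x s s with hx'
  rintro hex
  have hpos : 0 < Nat.find hex := by
    rcases Nat.eq_zero_or_pos (Nat.find hex) with h0 | h0
    · exact absurd (by simpa [h0] using Nat.find_spec hex) hb
    · exact h0
  set m := Nat.find hex with hm
  have hts : x'^[m] b = s := Nat.find_spec hex
  have hm1 : m = (m - 1) + 1 := (Nat.succ_pred_eq_of_pos hpos).symm
  rw [hm1, Function.iterate_succ_apply'] at hts
  have htne : x'^[m - 1] b ≠ s := Nat.find_min hex (by omega)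
  rw [hx', Function.update_of_ne htne] at hts
  exact h _ htne hts

lemma Wv_no_inlink (x : V → V) (s : V) (h : ∀ t, t ≠ s → x t ≠ s) (b : V) (hb : b ≠ s) :
    Wv β x s b = 1 := by
  rw [Wv, dif_neg (no_reach_of_no_inlink x s h b hb)]


lemma br1_in (hβ0 : 0 < β) (hβ1 : β < 1) (η : V → ℝ) (hη : ∀ i, 0 < η i)
    (x : V → V) (s t : V) (ht : t ≠ s) (hts : x t = s) :
    br1 β η x s = {a | a ≠ s ∧ x a = s} := by
  have hC : 0 < (1 - β) * ∑ i, η i * rho β x s i :=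
    mul_pos (by linarith) (sum_rho_pos hβ0 η hη x s)
  ext a
  simp only [br1, Set.mem_setOf_eq]
  constructor
  · rintro ⟨has, hall⟩
    refine ⟨has, ?_⟩
    by_contra hna
    have h1 := hall t ht
    rw [util_update hβ0 hβ1 η x s t ht, util_update hβ0 hβ1 η x s a has,
      Wv_in x s t ht hts] at h1
    have h2 := Wv_lt_of_not_in hβ0 hβ1 x s a has hna
    nlinarith [mul_pos hC (sub_pos.mpr h2)]
  · rintro ⟨has, hxa⟩
    refine ⟨has, fun b hbs => ?_⟩
    rw [util_update hβ0 hβ1 η x s b hbs, util_update hβ0 hβ1 η x s a has,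
      Wv_in x s a has hxa]
    by_cases hxb : x b = s
    · rw [Wv_in x s b hbs hxb]
    · have h2 := Wv_lt_of_not_in hβ0 hβ1 x s b hbs hxb
      nlinarith [mul_pos hC (sub_pos.mpr h2)]

lemma br1_noin (hβ0 : 0 < β) (hβ1 : β < 1) (η : V → ℝ) (hη : ∀ i, 0 < η i)
    (x : V → V) (s : V) (h : ∀ t, t ≠ s → x t ≠ s) :
    br1 β η x s = {a | a ≠ s} := by
  ext a
  simp only [br1, Set.mem_setOf_eq]
  constructor
  · rintro ⟨has, -⟩; exact has
  · intro has
    refine ⟨has, fun b hbs => ?_⟩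
    rw [util_update hβ0 hβ1 η x s b hbs, util_update hβ0 hβ1 η x s a has,
      Wv_no_inlink x s h b hbs, Wv_no_inlink x s h a has]

lemma step_of_matching (hβ0 : 0 < β) (hβ1 : β < 1) (η : V → ℝ) (hη : ∀ i, 0 < η i)
    (x : V → V) (hx1 : ∀ i, x i ≠ i) (hx2 : ∀ i, x (x i) = i)
    (y : V → V) (hstep : step1 β η x y) : y = x := by
  obtain ⟨s, a, ha, rfl⟩ := hstep
  rw [br1_in hβ0 hβ1 η hη x s (x s) (hx1 s) (hx2 s)] at ha
  obtain ⟨has, hxa⟩ := ha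
  have haxs : a = x s := by
    have := hx2 a
    rw [hxa] at this
    rw [← this]
  rw [haxs, Function.update_eq_self]

lemma even_card_invol (f : V → V) (n : ℕ) : ∀ (S : Finset V), S.card = n →
    (∀ a ∈ S, f a ∈ S) → (∀ a ∈ S, f (f a) = a) → (∀ a ∈ S, f a ≠ a) → Even n := by
  induction n using Nat.strong_induction_on with
  | _ n ih =>
    intro S hcard hmem hinv hne
    rcases S.eq_empty_or_nonempty with rfl | ⟨a, ha⟩
    · subst hcard; simp
    · have hfa : f a ∈ S := hmem a ha
      have hfane : f a ≠ a := hne a ha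
      set S' := (S.erase a).erase (f a) with hS'
      have hfamem : f a ∈ S.erase a := Finset.mem_erase.mpr ⟨hfane, hfa⟩
      have hn2 : 2 ≤ n := by
        rw [← hcard]
        exact Finset.one_lt_card.mpr ⟨a, ha, f a, hfa, (Ne.symm hfane)⟩
      have hcard' : S'.card = n - 2 := by
        rw [hS', Finset.card_erase_of_mem hfamem, Finset.card_erase_of_mem ha, hcard]
        omega
      have hmem' : ∀ c ∈ S', c ∈ S ∧ c ≠ a ∧ c ≠ f a := by
        intro c hc
        rw [hS', Finset.mem_erase, Finset.mem_erase] at hc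
        exact ⟨hc.2.2, hc.2.1, hc.1⟩
      have hstep : Even (n - 2) := by
        refine ih (n - 2) (by omega) S' hcard' ?_ ?_ ?_
        · intro c hc
          obtain ⟨hcS, hca, hcfa⟩ := hmem' c hc
          rw [hS', Finset.mem_erase, Finset.mem_erase]
          refine ⟨?_, ?_, hmem c hcS⟩
          · intro hfc
            exact hca (by rw [← hinv c hcS, hfc, hinv a ha])
          · intro hfc
            exact hcfa (by rw [← hinv c hcS, hfc])
        · exact fun c hc => hinv c (hmem' c hc).1
        · exact fun c hc => hne c (hmem' c hc).1
      obtain ⟨k, hk⟩ := hstep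
      exact ⟨k + 1, by omega⟩


lemma reach_matching (hβ0 : 0 < β) (hβ1 : β < 1) (η : V → ℝ) (hη : ∀ i, 0 < η i)
    (hn : Even (Fintype.card V)) (n : ℕ) :
    ∀ (x : V → V), (univ.filter (fun i => x (x i) ≠ i)).card = n → (∀ i, x i ≠ i) →
    ∃ y, ((∀ i, y i ≠ i) ∧ ∀ i, y (y i) = i) ∧ Relation.ReflTransGen (step1 β η) x y := by
  induction n using Nat.strong_induction_on with
  | _ n ih =>
    intro x hcard hfix
    rcases (univ.filter (fun i => x (x i) ≠ i)).eq_empty_or_nonempty with hU | ⟨u, hu⟩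
    · refine ⟨x, ⟨hfix, fun i => ?_⟩, Relation.ReflTransGen.refl⟩
      by_contra hi
      exact absurd hU (Finset.ne_empty_of_mem (Finset.mem_filter.mpr ⟨Finset.mem_univ i, hi⟩))
    · have huU : x (x u) ≠ u := (Finset.mem_filter.mp hu).2
      -- a node is "matched" if x (x i) = i; key fact: if i is matched then x i is not
      -- an in-neighbour of any unmatched node
      by_cases hin : ∃ t, t ≠ u ∧ x t = u
      · -- u has an in-neighbour t : match u with t
        obtain ⟨t, htu, htx⟩ := hin
        set x₁ := Function.update x u t with hx₁
        have hx₁u : x₁ u = t := Function.update_self u t x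
        have hx₁t : x₁ t = u := by rw [hx₁, Function.update_of_ne htu, htx]
        have hstep : step1 β η x x₁ :=
          ⟨u, t, by rw [br1_in hβ0 hβ1 η hη x u t htu htx]; exact ⟨htu, htx⟩, rfl⟩
        have hfix₁ : ∀ i, x₁ i ≠ i := by
          intro i
          by_cases hiu : i = u
          · rw [hiu, hx₁u]; exact htu
          · rw [hx₁, Function.update_of_ne hiu]; exact hfix i
        have hsub : (univ.filter (fun i => x₁ (x₁ i) ≠ i)) ⊆
            (univ.filter (fun i => x (x i) ≠ i)).erase u := by
          intro i hi
          have hi2 : x₁ (x₁ i) ≠ i := (Finset.mem_filter.mp hi).2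
          have hiu : i ≠ u := by
            rintro rfl
            exact hi2 (by rw [hx₁u, hx₁t])
          have hit : i ≠ t := by
            rintro rfl
            exact hi2 (by rw [hx₁t, hx₁u])
          refine Finset.mem_erase.mpr ⟨hiu, Finset.mem_filter.mpr ⟨Finset.mem_univ i, ?_⟩⟩
          intro hmatched
          -- i matched in x, i ≠ u, i ≠ t ⟹ x₁ (x₁ i) = i
          have hxiu : x i ≠ u := by
            intro hxi
            have : x u = i := by rw [← hxi, hmatched]
            exact huU (by rw [this, hxi])
          have hxit : x i ≠ t := by
            intro hxi
            have : i = u := by rw [← htx, ← hxi, hmatched]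
            exact hiu this
          refine hi2 ?_
          rw [hx₁, Function.update_of_ne hiu, Function.update_of_ne hxiu, hmatched]
        have hlt : (univ.filter (fun i => x₁ (x₁ i) ≠ i)).card < n := by
          calc (univ.filter (fun i => x₁ (x₁ i) ≠ i)).card
              ≤ ((univ.filter (fun i => x (x i) ≠ i)).erase u).card := Finset.card_le_card hsub
            _ < n := by
                have hn1 : 0 < n := hcard ▸ Finset.card_pos.mpr ⟨u, hu⟩
                rw [Finset.card_erase_of_mem hu, hcard]; omega
        obtain ⟨y, hy, hreach⟩ := ih _ hlt x₁ rfl hfix₁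
        exact ⟨y, hy, Relation.ReflTransGen.head hstep hreach⟩
      ·
        -- If some unmatched node w has an in-neighbour, apply the previous case with w.
        by_cases hin2 : ∃ w, (x (x w) ≠ w) ∧ ∃ t, t ≠ w ∧ x t = w
        · obtain ⟨w, hwU, t, htw, htx⟩ := hin2
          -- same as case A but with w ; to avoid duplication we handle it by
          -- noting the above case was generic in u. We redo it here.
          set x₁ := Function.update x w t with hx₁
          have hx₁w : x₁ w = t := Function.update_self w t x
          have hx₁t : x₁ t = w := by rw [hx₁, Function.update_of_ne htw, htx]
          have hstep : step1 β η x x₁ :=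
            ⟨w, t, by rw [br1_in hβ0 hβ1 η hη x w t htw htx]; exact ⟨htw, htx⟩, rfl⟩
          have hfix₁ : ∀ i, x₁ i ≠ i := by
            intro i
            by_cases hiw : i = w
            · rw [hiw, hx₁w]; exact htw
            · rw [hx₁, Function.update_of_ne hiw]; exact hfix i
          have hwmem : w ∈ univ.filter (fun i => x (x i) ≠ i) :=
            Finset.mem_filter.mpr ⟨Finset.mem_univ w, hwU⟩
          have hsub : (univ.filter (fun i => x₁ (x₁ i) ≠ i)) ⊆
              (univ.filter (fun i => x (x i) ≠ i)).erase w := by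
            intro i hi
            have hi2 : x₁ (x₁ i) ≠ i := (Finset.mem_filter.mp hi).2
            have hiw : i ≠ w := by
              rintro rfl
              exact hi2 (by rw [hx₁w, hx₁t])
            have hit : i ≠ t := by
              rintro rfl
              exact hi2 (by rw [hx₁t, hx₁w])
            refine Finset.mem_erase.mpr ⟨hiw, Finset.mem_filter.mpr ⟨Finset.mem_univ i, ?_⟩⟩
            intro hmatched
            have hxiw : x i ≠ w := by
              intro hxi
              have : x w = i := by rw [← hxi, hmatched]
              exact hwU (by rw [this, hxi])
            have hxit : x i ≠ t := by
              intro hxi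
              have : i = w := by rw [← htx, ← hxi, hmatched]
              exact hiw this
            refine hi2 ?_
            rw [hx₁, Function.update_of_ne hiw, Function.update_of_ne hxiw, hmatched]
          have hlt : (univ.filter (fun i => x₁ (x₁ i) ≠ i)).card < n := by
            calc (univ.filter (fun i => x₁ (x₁ i) ≠ i)).card
                ≤ ((univ.filter (fun i => x (x i) ≠ i)).erase w).card := Finset.card_le_card hsub
              _ < n := by
                  have hn1 : 0 < n := hcard ▸ Finset.card_pos.mpr ⟨w, hwmem⟩
                  rw [Finset.card_erase_of_mem hwmem, hcard]; omega
          obtain ⟨y, hy, hreach⟩ := ih _ hlt x₁ rfl hfix₁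
          exact ⟨y, hy, Relation.ReflTransGen.head hstep hreach⟩
        · -- no unmatched node has any in-neighbour
          push_neg at hin2
          have hnoin : ∀ w, x (x w) ≠ w → ∀ t, t ≠ w → x t ≠ w := by
            intro w hw t htw
            exact hin2 w hw t htw
          -- the matched set has even cardinality, so there are ≥ 2 unmatched nodes
          have hMeven : Even (univ.filter (fun i => x (x i) = i)).card := by
            refine even_card_invol x _ (univ.filter (fun i => x (x i) = i)) rfl ?_ ?_ ?_
            · intro a haM
              have h2 : x (x a) = a := (Finset.mem_filter.mp haM).2
              refine Finset.mem_filter.mpr ⟨Finset.mem_univ _, ?_⟩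
              rw [h2]
            · exact fun a haM => (Finset.mem_filter.mp haM).2
            · exact fun a _ => hfix a
          have hsplit : (univ.filter (fun i => x (x i) = i)).card
              + (univ.filter (fun i => x (x i) ≠ i)).card = Fintype.card V := by
            have h := Finset.card_filter_add_card_filter_not
              (s := (univ : Finset V)) (p := fun i => x (x i) = i)
            simpa [ne_eq, Finset.card_univ] using h
          have hUeven : Even n := by
            rw [← hcard]
            rcases hMeven with ⟨k, hk⟩
            rcases hn with ⟨m, hm⟩
            exact ⟨m - k, by omega⟩
          have hn2 : 2 ≤ n := by
            rcases hUeven with ⟨k, hk⟩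
            rcases Nat.eq_zero_or_pos n with h0 | h1
            · rw [h0] at hcard
              exact absurd (Finset.card_eq_zero.mp hcard) (Finset.ne_empty_of_mem hu)
            · omega
          -- pick a second unmatched node v ≠ u
          have : 0 < ((univ.filter (fun i => x (x i) ≠ i)).erase u).card := by
            rw [Finset.card_erase_of_mem hu, hcard]; omega
          obtain ⟨v, hv⟩ := Finset.card_pos.mp this
          have hvu : v ≠ u := (Finset.mem_erase.mp hv).1
          have hvU : x (x v) ≠ v := (Finset.mem_filter.mp (Finset.mem_erase.mp hv).2).2
          -- step 1 : u points at v (every action is a best response for u)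
          set x₁ := Function.update x u v with hx₁
          have hstep1 : step1 β η x x₁ := by
            refine ⟨u, v, ?_, rfl⟩
            rw [br1_noin hβ0 hβ1 η hη x u (hnoin u huU)]
            exact hvu
          have hx₁u : x₁ u = v := Function.update_self u v x
          have hfix₁ : ∀ i, x₁ i ≠ i := by
            intro i
            by_cases hiu : i = u
            · subst hiu; rw [hx₁u]; exact fun h => hvu h
            · rw [hx₁, Function.update_of_ne hiu]; exact hfix i
          -- step 2 : v points back at u
          have huv : u ≠ v := fun h => hvu h.symm
          have hx₁v : x₁ v = x v := by rw [hx₁, Function.update_of_ne hvu]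
          have hstep2 : step1 β η x₁ (Function.update x₁ v u) := by
            refine ⟨v, u, ?_, rfl⟩
            rw [br1_in hβ0 hβ1 η hη x₁ v u huv hx₁u]
            exact ⟨huv, hx₁u⟩
          set x₂ := Function.update x₁ v u with hx₂
          have hx₂v : x₂ v = u := Function.update_self v u x₁
          have hx₂u : x₂ u = v := by rw [hx₂, Function.update_of_ne huv, hx₁u]
          have hfix₂ : ∀ i, x₂ i ≠ i := by
            intro i
            by_cases hiv : i = v
            · subst hiv; rw [hx₂v]; exact huv
            · rw [hx₂, Function.update_of_ne hiv]; exact hfix₁ i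
          have hsub : (univ.filter (fun i => x₂ (x₂ i) ≠ i)) ⊆
              (univ.filter (fun i => x (x i) ≠ i)).erase u := by
            intro i hi
            have hi2 : x₂ (x₂ i) ≠ i := (Finset.mem_filter.mp hi).2
            have hiu : i ≠ u := by
              rintro rfl
              exact hi2 (by rw [hx₂u, hx₂v])
            have hiv : i ≠ v := by
              rintro rfl
              exact hi2 (by rw [hx₂v, hx₂u])
            refine Finset.mem_erase.mpr ⟨hiu, Finset.mem_filter.mpr ⟨Finset.mem_univ i, ?_⟩⟩
            intro hmatched
            have hxiu : x i ≠ u := hnoin u huU i hiu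
            have hxiv : x i ≠ v := hnoin v hvU i hiv
            have e1 : x₂ i = x i := by
              rw [hx₂, Function.update_of_ne hiv, hx₁, Function.update_of_ne hiu]
            have e2 : x₂ (x i) = x (x i) := by
              rw [hx₂, Function.update_of_ne hxiv, hx₁, Function.update_of_ne hxiu]
            exact hi2 (by rw [e1, e2, hmatched])
          have hlt : (univ.filter (fun i => x₂ (x₂ i) ≠ i)).card < n := by
            calc (univ.filter (fun i => x₂ (x₂ i) ≠ i)).card
                ≤ ((univ.filter (fun i => x (x i) ≠ i)).erase u).card := Finset.card_le_card hsub
              _ < n := by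
                  have hn1 : 0 < n := hcard ▸ Finset.card_pos.mpr ⟨u, hu⟩
                  rw [Finset.card_erase_of_mem hu, hcard]; omega
          obtain ⟨y, hy, hreach⟩ := ih _ hlt x₂ rfl hfix₂
          exact ⟨y, hy, Relation.ReflTransGen.head hstep1
            (Relation.ReflTransGen.head hstep2 hreach)⟩


lemma reach_from_matching_eq (hβ0 : 0 < β) (hβ1 : β < 1) (η : V → ℝ) (hη : ∀ i, 0 < η i)
    (x : V → V) (hx1 : ∀ i, x i ≠ i) (hx2 : ∀ i, x (x i) = i)
    (y : V → V) (h : Relation.ReflTransGen (step1 β η) x y) : y = x := by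
  induction h with
  | refl => rfl
  | tail h1 h2 ih =>
    rw [ih] at h2
    exact step_of_matching hβ0 hβ1 η hη x hx1 hx2 _ h2

end BR

/-- for `n` even, the limit set `N*` of the best response dynamics of
`Γ(V,β,η,1)` is the set `S` of profiles whose graph is a disjoint union of `n/2`
2-cliques: `S` is trapping, globally reachable, and contained in every trapping
globally reachable set of configurations. -/
theorem limit_set_even_m1
    {V : Type*} [Fintype V] [DecidableEq V]
    (β : ℝ) (hβ0 : 0 < β) (hβ1 : β < 1)
    (η : V → ℝ) (hη : ∀ i, 0 < η i) (hηsum : ∑ i, η i = 1)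
    (hn : Even (Fintype.card V)) :
    (∀ x : V → V, ((∀ i, x i ≠ i) ∧ ∀ i, x (x i) = i) →
      ∀ y, step1 β η x y → ((∀ i, y i ≠ i) ∧ ∀ i, y (y i) = i)) ∧
    (∀ x : V → V, (∀ i, x i ≠ i) →
      ∃ y, ((∀ i, y i ≠ i) ∧ ∀ i, y (y i) = i) ∧
        Relation.ReflTransGen (step1 β η) x y) ∧
    (∀ T : Set (V → V),
      (∀ x ∈ T, ∀ y, step1 β η x y → y ∈ T) →
      (∀ x : V → V, (∀ i, x i ≠ i) → ∃ y ∈ T, Relation.ReflTransGen (step1 β η) x y) →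
      ∀ x : V → V, ((∀ i, x i ≠ i) ∧ ∀ i, x (x i) = i) → x ∈ T) := by
  constructor
  · intro x hx y hstep
    rw [BR.step_of_matching hβ0 hβ1 η hη x hx.1 hx.2 y hstep]
    exact hx
  constructor
  · intro x hfix
    exact BR.reach_matching hβ0 hβ1 η hη hn _ x rfl hfix
  · intro T htrap hreach x hx
    obtain ⟨y, hyT, hxy⟩ := hreach x hx.1
    have hyx : y = x := BR.reach_from_matching_eq hβ0 hβ1 η hη x hx.1 hx.2 y hxy
    rwa [hyx] at hyT
end

section
/- In the centrality game with m = 2, if for some configuration x and nodes i ≠ s the expected hitting time attains the bound τ_i^s(x) = 1/((1−β)η_s), then s has empty in-neighborhood in G(x). -/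
open Finset Matrix

noncomputable def P2 {V : Type*} [DecidableEq V]
    (β : ℝ) (η : V → ℝ) (x : V → Finset V) (i j : V) : ℝ :=
  β * (if j ∈ x i then (1 : ℝ) / 2 else 0) + (1 - β) * η j

/-- in `Γ(V,β,η,2)`, if some hitting time on `s` attains the bound
`1/((1-β)η_s)`, then `s` has empty in-neighborhood in `G(x)`. -/
theorem hitting_time_bound_attained_empty_in_neighborhood_m2
    {V : Type*} [Fintype V] [DecidableEq V]
    (β : ℝ) (hβ0 : 0 < β) (hβ1 : β < 1)
    (η : V → ℝ) (hη : ∀ i, 0 < η i) (hηsum : ∑ i, η i = 1)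
    (x : V → Finset V) (hx : ∀ i, (x i).card = 2 ∧ i ∉ x i)
    (s : V) (τ : V → ℝ)
    (hτs : τ s = 0)
    (hτ : ∀ i, i ≠ s → τ i = 1 + ∑ j, P2 β η x i j * τ j)
    (i : V) (hi : i ≠ s) (heq : τ i = 1 / ((1 - β) * η s)) :
    ∀ j, s ∉ x j := by
  have hb : (0:ℝ) < 1 - β := by linarith
  set c : ℝ := (1 - β) * η s with hcdef
  have hc0 : 0 < c := mul_pos hb (hη s)
  have hPge : ∀ j k, (1 - β) * η k ≤ P2 β η x j k := by
    intro j k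
    have : 0 ≤ β * (if k ∈ x j then (1:ℝ)/2 else 0) :=
      mul_nonneg hβ0.le (by split_ifs <;> norm_num)
    unfold P2; linarith
  have hP0 : ∀ j k, 0 ≤ P2 β η x j k := fun j k =>
    le_trans (mul_pos hb (hη k)).le (hPge j k)
  have hrow : ∀ j, ∑ k, P2 β η x j k = 1 := by
    intro j
    unfold P2
    rw [Finset.sum_add_distrib, ← Finset.mul_sum, ← Finset.mul_sum]
    have h1 : ∑ k, (if k ∈ x j then (1:ℝ)/2 else 0) = 1 := by
      rw [Finset.sum_ite_mem, Finset.univ_inter, Finset.sum_const, (hx j).1]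
      norm_num
    rw [h1, hηsum]; ring
  -- split the sum at s
  have hsplit : ∀ j, ∑ k, P2 β η x j k * τ k
      = ∑ k ∈ univ.erase s, P2 β η x j k * τ k := by
    intro j
    rw [← Finset.add_sum_erase univ _ (mem_univ s), hτs]
    ring
  have herase : ∀ j, ∑ k ∈ univ.erase s, P2 β η x j k = 1 - P2 β η x j s := by
    intro j
    have := Finset.add_sum_erase univ (P2 β η x j) (mem_univ s)
    rw [hrow j] at this
    linarith
  -- maximizer
  obtain ⟨j0, -, hj0max⟩ :=
    Finset.exists_max_image (univ : Finset V) τ ⟨s, mem_univ s⟩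
  set M : ℝ := τ j0 with hMdef
  have hM : ∀ k, τ k ≤ M := fun k => hj0max k (mem_univ k)
  have hMB : 1 / c ≤ M := heq ▸ hM i
  have hM0 : 0 < M := lt_of_lt_of_le (by positivity) hMB
  -- generic bound for j ≠ s
  have hbound : ∀ j, ∑ k ∈ univ.erase s, P2 β η x j k * τ k
      ≤ (1 - P2 β η x j s) * M := by
    intro j
    calc ∑ k ∈ univ.erase s, P2 β η x j k * τ k
        ≤ ∑ k ∈ univ.erase s, P2 β η x j k * M := by
          apply Finset.sum_le_sum
          intro k _
          exact mul_le_mul_of_nonneg_left (hM k) (hP0 j k)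
      _ = (1 - P2 β η x j s) * M := by rw [← Finset.sum_mul, herase j]
  have hj0s : j0 ≠ s := by
    intro h
    rw [hMdef, h, hτs] at hM0
    exact lt_irrefl 0 hM0
  -- M ≤ 1/c
  have hchain : M ≤ 1 + (1 - P2 β η x j0 s) * M := by
    have := hτ j0 hj0s
    rw [hsplit j0] at this
    linarith [hbound j0]
  have hPM : P2 β η x j0 s * M ≤ 1 := by nlinarith
  have hcM : c * M ≤ 1 := by
    have := hPge j0 s
    nlinarith
  have hMeq : M = 1 / c := by
    have : M ≤ 1 / c := by
      rw [le_div_iff₀ hc0]; linarith [hcM]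
    linarith
  have hcM1 : c * M = 1 := by rw [hMeq]; field_simp
  -- i attains the max
  have hiM : τ i = M := by rw [heq, hMeq]
  -- equality in the sum bound at i forces τ k = M for all k ≠ s
  have htauM : ∀ k, k ≠ s → τ k = M := by
    have hSi : ∑ k ∈ univ.erase s, P2 β η x i k * τ k
        = ∑ k ∈ univ.erase s, P2 β η x i k * M := by
      have h1 := hτ i hi
      rw [hsplit i, hiM] at h1
      have h2 : ∑ k ∈ univ.erase s, P2 β η x i k * M = (1 - P2 β η x i s) * M := by
        rw [← Finset.sum_mul, herase i]
      have h3 : (1 - P2 β η x i s) * M ≤ (1 - c) * M := by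
        have := hPge i s
        nlinarith
      have h4 : (1 - c) * M = M - 1 := by nlinarith [hcM1]
      -- from h1 : M = 1 + S, so S = M - 1; and S ≤ (1-P_is)M ≤ M - 1
      have h5 := hbound i
      linarith
    have := (Finset.sum_eq_sum_iff_of_le (fun k _ =>
      mul_le_mul_of_nonneg_left (hM k) (hP0 i k))).mp hSi
    intro k hk
    have hkmem : k ∈ univ.erase s := Finset.mem_erase.mpr ⟨hk, mem_univ k⟩
    have hPk : 0 < P2 β η x i k := lt_of_lt_of_le (mul_pos hb (hη k)) (hPge i k)
    have := this k hkmem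
    exact mul_left_cancel₀ (ne_of_gt hPk) this
  -- conclude for every j
  intro j hmem
  by_cases hjs : j = s
  · exact (hx s).2 (hjs ▸ hmem)
  · have hτj := hτ j hjs
    rw [hsplit j, htauM j hjs] at hτj
    have hsum : ∑ k ∈ univ.erase s, P2 β η x j k * τ k
        = (1 - P2 β η x j s) * M := by
      rw [← herase j, Finset.sum_mul]
      apply Finset.sum_congr rfl
      intro k hk
      rw [htauM k (Finset.mem_erase.mp hk).1]
    rw [hsum] at hτj
    -- M = 1 + (1 - P_js) M  ⇒ P_js * M = 1 = c * M ⇒ P_js = c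
    have hPjs : P2 β η x j s = c := by
      have h1 : P2 β η x j s * M = 1 := by nlinarith
      have := hM0.ne'
      nlinarith [hcM1]
    have : P2 β η x j s = β * (1/2) + c := by
      unfold P2; rw [if_pos hmem]
    nlinarith
end

section
/- In the centrality game with m = 2, let x be a configuration, s a node with at least one in-neighbor, and k ∈ N_s^-(x). Then τ_k^s(x) ≤ (1−β/2)/((1−β)(η_s + (β/2)η_k)) and τ_i^s(x) ≤ 1/((1−β)(η_s + (β/2)η_k)) for every node i. -/
open Finset Matrix

/-- in `Γ(V,β,η,2)`, if `k` is an in-neighbor of `s`, then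
`τ k ≤ (1-β/2)/((1-β)(η_s + (β/2)η_k))` and `τ i ≤ 1/((1-β)(η_s + (β/2)η_k))`
for every node `i`. -/
theorem hitting_time_refined_upper_bounds_m2
    {V : Type*} [Fintype V] [DecidableEq V]
    (β : ℝ) (hβ0 : 0 < β) (hβ1 : β < 1)
    (η : V → ℝ) (hη : ∀ i, 0 < η i) (hηsum : ∑ i, η i = 1)
    (x : V → Finset V) (hx : ∀ i, (x i).card = 2 ∧ i ∉ x i)
    (s : V) (τ : V → ℝ)
    (hτs : τ s = 0)
    (hτ : ∀ i, i ≠ s → τ i = 1 + ∑ j, P2 β η x i j * τ j)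
    (k : V) (hk : s ∈ x k) :
    τ k ≤ (1 - β / 2) / ((1 - β) * (η s + (β / 2) * η k)) ∧
    ∀ i, τ i ≤ 1 / ((1 - β) * (η s + (β / 2) * η k)) := by
  obtain ⟨i₀, -, hi₀⟩ := Finset.exists_max_image (Finset.univ : Finset V) τ ⟨s, Finset.mem_univ s⟩
  set M := τ i₀ with hM
  have hMge : ∀ j, τ j ≤ M := fun j => hi₀ j (Finset.mem_univ j)
  have hks : k ≠ s := fun h => (hx k).2 (h ▸ hk)
  have hβ' : (0:ℝ) < 1 - β := by linarith
  have hηk1 : η k ≤ 1 := by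
    calc η k ≤ ∑ i, η i :=
      Finset.single_le_sum (fun i _ => (hη i).le) (Finset.mem_univ k)
    _ = 1 := hηsum
  have hηsk : η s + η k ≤ 1 := by
    have hsub := Finset.sum_le_sum_of_subset_of_nonneg
      (Finset.subset_univ ({s, k} : Finset V)) (fun i _ _ => (hη i).le)
    rw [Finset.sum_pair hks.symm] at hsub
    linarith [hηsum ▸ hsub]
  have hPpos : ∀ i j, 0 < P2 β η x i j := by
    intro i j
    unfold P2
    have : (0:ℝ) ≤ (if j ∈ x i then (1:ℝ)/2 else 0) := by positivity
    nlinarith [hη j]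
  have hrow : ∀ i, ∑ j, P2 β η x i j = 1 := by
    intro i
    have hsplit : ∑ j, P2 β η x i j
        = β * ∑ j, (if j ∈ x i then (1:ℝ)/2 else 0) + (1-β) * ∑ j, η j := by
      rw [Finset.mul_sum, Finset.mul_sum, ← Finset.sum_add_distrib]
      rfl
    have hsum : ∑ j, (if j ∈ x i then (1:ℝ)/2 else 0) = 1 := by
      rw [Finset.sum_ite_mem, Finset.univ_inter, Finset.sum_const, (hx i).1,
        nsmul_eq_mul]
      norm_num
    rw [hsplit, hsum, hηsum]; ring
  set a := (1-β) * η s with ha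
  set b := (1-β) * η k with hb
  set q := (1 - β) * (η s + (β / 2) * η k) with hq
  have hqab : q = a + β/2 * b := by rw [hq, ha, hb]; ring
  have ha0 : 0 < a := mul_pos hβ' (hη s)
  have hb0 : 0 < b := mul_pos hβ' (hη k)
  have hq0 : 0 < q := by
    rw [hq]
    have : 0 < η s + β / 2 * η k := by nlinarith [hη s, hη k]
    exact mul_pos hβ' this
  have hb1 : b < 1 := by
    rw [hb]; nlinarith [hη k]
  have hab : a + b ≤ 1 - β := by
    rw [ha, hb, ← mul_add]
    nlinarith
  clear_value M a b q
  -- Key recurrence inequality for any i ≠ s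
  have lemA : ∀ i, i ≠ s →
      τ i ≤ 1 + M - P2 β η x i s * M - P2 β η x i k * (M - τ k) := by
    intro i his
    rw [hτ i his]
    have e1 : ∑ j, P2 β η x i j * τ j = M - ∑ j, P2 β η x i j * (M - τ j) := by
      have e2 : ∑ j, P2 β η x i j * (M - τ j)
          = (∑ j, P2 β η x i j) * M - ∑ j, P2 β η x i j * τ j := by
        rw [Finset.sum_mul, ← Finset.sum_sub_distrib]
        congr 1; funext j; ring
      rw [e2, hrow i]; ring
    have sub : P2 β η x i s * (M - τ s) + P2 β η x i k * (M - τ k)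
        ≤ ∑ j, P2 β η x i j * (M - τ j) := by
      have hsub := Finset.sum_le_sum_of_subset_of_nonneg
        (f := fun j => P2 β η x i j * (M - τ j))
        (Finset.subset_univ ({s, k} : Finset V))
        (fun j _ _ => mul_nonneg (hPpos i j).le (by linarith [hMge j]))
      rwa [Finset.sum_pair hks.symm] at hsub
    rw [hτs] at sub
    rw [e1]
    linarith
  have hPk_s : P2 β η x k s = β/2 + a := by
    unfold P2; rw [if_pos hk, ha]; ring
  have hPk_k : P2 β η x k k = b := by
    unfold P2; rw [if_neg (hx k).2, hb]; ring
  -- inequality (1)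
  have h1 : (1 - b) * τ k ≤ 1 + (1 - β/2 - a - b) * M := by
    have := lemA k hks
    rw [hPk_s, hPk_k] at this
    nlinarith
  -- main bound: q * M ≤ 1
  have hqM : q * M ≤ 1 := by
    rcases le_or_gt M 0 with hM0 | hM0
    · nlinarith
    · have hi₀s : i₀ ≠ s := by
        intro h; rw [hM, h, hτs] at hM0; exact lt_irrefl 0 hM0
      by_cases hik : i₀ = k
      · have hτkM : τ k = M := by rw [hM, hik]
        rw [hτkM] at h1
        nlinarith
      · have hA := lemA i₀ hi₀s
        have hPs : a ≤ P2 β η x i₀ s := by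
          unfold P2
          have : (0:ℝ) ≤ (if s ∈ x i₀ then (1:ℝ)/2 else 0) := by positivity
          rw [ha]; nlinarith
        have hPk : b ≤ P2 β η x i₀ k := by
          unfold P2
          have : (0:ℝ) ≤ (if k ∈ x i₀ then (1:ℝ)/2 else 0) := by positivity
          rw [hb]; nlinarith
        have hMk : τ k ≤ M := hMge k
        have hτi₀ : τ i₀ = M := hM.symm
        rw [hτi₀] at hA
        have h2 : a * M + b * (M - τ k) ≤ 1 := by
          have g1 := mul_le_mul_of_nonneg_right hPs (le_of_lt hM0)
          have g2 := mul_le_mul_of_nonneg_right hPk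
            (by linarith : (0:ℝ) ≤ M - τ k)
          linarith
        -- combine (1) and (2): multiply (2) by (1-b), add b*(1)
        have f1 := mul_le_mul_of_nonneg_left h1 hb0.le
        have f2 := mul_le_mul_of_nonneg_left h2 (by linarith : (0:ℝ) ≤ 1 - b)
        rw [hqab]
        linarith [f1, f2]
  have hc0 : (0:ℝ) ≤ 1 - β/2 - a - b := by linarith
  constructor
  · rw [le_div_iff₀ hq0]
    -- multiply (1) by q, use q*M ≤ 1 : q*(1-b)*τ k ≤ q + (1-β/2-a-b) = (1-β/2)*(1-b)
    have key : (1 - b) * (τ k * q) ≤ (1 - b) * (1 - β/2) := by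
      have h1q := mul_le_mul_of_nonneg_left h1 hq0.le
      have h2q := mul_le_mul_of_nonneg_left hqM hc0
      rw [hqab] at h1q h2q ⊢
      linarith [h1q, h2q]
    have := le_of_mul_le_mul_left key (by linarith : (0:ℝ) < 1 - b)
    linarith
  · intro i
    rw [le_div_iff₀ hq0]
    have hiM := hMge i
    linarith [mul_le_mul_of_nonneg_left hiM hq0.le]
end

section
/- In the centrality game with m = 2, if x is a configuration, k ∈ N_s^-(x), and the hitting-time upper bounds are attained with equality, i.e., τ_k^s(x) = (1−β/2)/((1−β)(η_s + (β/2)η_k)) and τ_i^s(x) = 1/((1−β)(η_s + (β/2)η_k)) for all i ≠ k, s, then the two-step in-neighborhood N_s^{-2}(x) equals {k}. -/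
open Finset Matrix

/-- in `Γ(V,β,η,2)`, if `k ∈ N_s^-(x)` and the hitting-time bounds
`T1 = (1-β/2)/((1-β)(η_s+(β/2)η_k))` and `T2 = 1/((1-β)(η_s+(β/2)η_k))` are attained
with equality (at `k` and at every `i ≠ k, s` respectively), then the two-step
in-neighborhood of `s` equals `{k}`. -/
theorem hitting_time_bounds_attained_single_in_neighbor_m2
    {V : Type*} [Fintype V] [DecidableEq V]
    (β : ℝ) (hβ0 : 0 < β) (hβ1 : β < 1)
    (η : V → ℝ) (hη : ∀ i, 0 < η i) (hηsum : ∑ i, η i = 1)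
    (x : V → Finset V) (hx : ∀ i, (x i).card = 2 ∧ i ∉ x i)
    (s : V) (τ : V → ℝ)
    (hτs : τ s = 0)
    (hτ : ∀ i, i ≠ s → τ i = 1 + ∑ j, P2 β η x i j * τ j)
    (k : V) (hk : s ∈ x k)
    (heqk : τ k = (1 - β / 2) / ((1 - β) * (η s + (β / 2) * η k)))
    (heq : ∀ i, i ≠ k → i ≠ s → τ i = 1 / ((1 - β) * (η s + (β / 2) * η k))) :
    {i : V | i ≠ s ∧ (s ∈ x i ∨ ∃ t, s ∈ x t ∧ t ∈ x i)} = {k} := by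
  have hks : k ≠ s := fun h => (hx s).2 (h ▸ hk)
  set D : ℝ := (1 - β) * (η s + β / 2 * η k) with hD
  have hD0 : 0 < D := by
    have h1 := hη s; have h2 := hη k
    have : 0 < η s + β / 2 * η k := by nlinarith
    exact mul_pos (by linarith) this
  set T2 : ℝ := 1 / D with hT2
  have hT2pos : 0 < T2 := by positivity
  have hDT2 : D * T2 = 1 := mul_one_div_cancel hD0.ne'
  have hval : ∀ j, τ j = T2 - (if j = s then T2 else 0) -
      (if j = k then β / 2 * T2 else 0) := by
    intro j
    by_cases hjs : j = s
    · subst hjs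
      rw [hτs, if_pos rfl, if_neg (Ne.symm hks)]
      ring
    · by_cases hjk : j = k
      · subst hjk
        rw [heqk, if_neg hjs, if_pos rfl, hT2, hD]
        field_simp
        ring
      · rw [heq j hjk hjs, if_neg hjs, if_neg hjk, hT2, hD]
        ring
  have hsum : (1 - β) * ∑ j, η j * τ j = (1 - β) * T2 - 1 := by
    have h1 : ∑ j, η j * τ j = T2 - η s * T2 - η k * (β / 2 * T2) := by
      have : ∀ j, η j * τ j = η j * T2 - (if j = s then η j * T2 else 0) -
          (if j = k then η j * (β / 2 * T2) else 0) := by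
        intro j; rw [hval j]; split_ifs <;> ring
      rw [Finset.sum_congr rfl (fun j _ => this j)]
      rw [Finset.sum_sub_distrib, Finset.sum_sub_distrib, ← Finset.sum_mul, hηsum]
      simp [Finset.sum_ite_eq']
    rw [h1]
    have : (1 - β) * (η s * T2 + η k * (β / 2 * T2)) = D * T2 := by rw [hD]; ring
    nlinarith [this, hDT2]
  have hkey : ∀ i, i ≠ s → τ i - (1 - β) * T2 = β / 2 * ∑ j ∈ x i, τ j := by
    intro i hi
    have h := hτ i hi
    have hP : ∑ j, P2 β η x i j * τ j =
        β / 2 * ∑ j ∈ x i, τ j + (1 - β) * ∑ j, η j * τ j := by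
      simp only [P2]
      have : ∀ j, (β * (if j ∈ x i then (1:ℝ)/2 else 0) + (1 - β) * η j) * τ j =
          (if j ∈ x i then β / 2 * τ j else 0) + (1 - β) * (η j * τ j) := by
        intro j; split_ifs <;> ring
      rw [Finset.sum_congr rfl (fun j _ => this j), Finset.sum_add_distrib,
        Finset.sum_ite_mem, Finset.univ_inter, Finset.mul_sum, Finset.mul_sum]
    rw [hP, hsum] at h
    linarith
  have hmain : ∀ i, i ≠ s → i ≠ k → ∀ j ∈ x i, j ≠ s ∧ j ≠ k := by
    intro i his hik
    have h1 := hkey i his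
    rw [heq i hik his] at h1
    have hsum2 : ∑ j ∈ x i, τ j = 2 * T2 := by
      have hb : β / 2 * ∑ j ∈ x i, τ j = β / 2 * (2 * T2) := by
        rw [← h1]; ring
      have hβ : β / 2 ≠ 0 := by positivity
      exact mul_left_cancel₀ hβ hb
    have hle : ∀ j ∈ x i, τ j ≤ T2 := by
      intro j _
      rw [hval j]
      split_ifs <;> nlinarith
    have hsc : ∑ j ∈ x i, τ j = ∑ j ∈ x i, T2 := by
      rw [Finset.sum_const, (hx i).1, hsum2]
      push_cast
      ring
    have hall := (Finset.sum_eq_sum_iff_of_le hle).mp hsc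
    intro j hj
    have hτj := hall j hj
    rw [hval j] at hτj
    constructor
    · intro hjs
      rw [if_pos hjs, if_neg (hjs ▸ Ne.symm hks)] at hτj
      linarith
    · intro hjk
      have hjs : j ≠ s := hjk ▸ hks
      rw [if_neg hjs, if_pos hjk] at hτj
      nlinarith
  have hkonly : ∀ t, s ∈ x t → t = k := by
    intro t ht
    by_contra htk
    have hts : t ≠ s := fun h => (hx s).2 (h ▸ ht)
    exact (hmain t hts htk s ht).1 rfl
  ext i
  simp only [Set.mem_setOf_eq, Set.mem_singleton_iff]
  constructor
  · rintro ⟨his, h | ⟨t, hst, hti⟩⟩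
    · exact hkonly i h
    · have := hkonly t hst
      subst this
      by_contra hik
      exact (hmain i his hik t hti).2 rfl
  · rintro rfl
    exact ⟨hks, Or.inl hk⟩
end

section
/- In the centrality game with m = 2, for any configuration x and node s, a node minimizing the hitting time to s lies in the in-neighborhood of s whenever that in-neighborhood is nonempty: if v₁ ∈ argmin_{i≠s} τ_i^s(x) and N_s^-(x) ≠ ∅, then v₁ ∈ N_s^-(x). -/
open Finset Matrix

/-- in `Γ(V,β,η,2)`, if the in-neighborhood of `s` is nonempty, then any
node minimizing the hitting time to `s` (among nodes `≠ s`) is an in-neighbor of `s`. -/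
theorem hitting_time_minimizer_is_in_neighbor_m2
    {V : Type*} [Fintype V] [DecidableEq V]
    (β : ℝ) (hβ0 : 0 < β) (hβ1 : β < 1)
    (η : V → ℝ) (hη : ∀ i, 0 < η i) (hηsum : ∑ i, η i = 1)
    (x : V → Finset V) (hx : ∀ i, (x i).card = 2 ∧ i ∉ x i)
    (s : V) (τ : V → ℝ)
    (hτs : τ s = 0)
    (hτ : ∀ i, i ≠ s → τ i = 1 + ∑ j, P2 β η x i j * τ j)
    (hne : ∃ k, s ∈ x k)
    (v₁ : V) (hv₁ : v₁ ≠ s) (hmin : ∀ i, i ≠ s → τ v₁ ≤ τ i) :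
    s ∈ x v₁ := by
  by_contra hcon
  set q : ℝ := (1 - β) * η s with hqdef
  have hq : 0 < q := mul_pos (by linarith) (hη s)
  -- positivity of entries
  have hpos : ∀ i j, 0 < P2 β η x i j := by
    intro i j
    unfold P2
    have := hη j
    split_ifs <;> nlinarith
  -- row sums equal 1
  have hrow : ∀ i, ∑ j, P2 β η x i j = 1 := by
    intro i
    unfold P2
    rw [Finset.sum_add_distrib, ← Finset.mul_sum, ← Finset.mul_sum, hηsum]
    have h1 : ∑ j, (if j ∈ x i then (1 : ℝ) / 2 else 0) = 1 := by
      rw [Finset.sum_ite_mem, Finset.univ_inter, Finset.sum_const, (hx i).1]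
      norm_num
    rw [h1]; ring
  -- sums against the "cut at s" function
  have hsplit : ∀ i (c : ℝ), ∑ j, P2 β η x i j * (if j = s then 0 else c)
      = (1 - P2 β η x i s) * c := by
    intro i c
    rw [← Finset.add_sum_erase _ _ (Finset.mem_univ s)]
    simp only [if_pos rfl, mul_zero, zero_add]
    have he : ∑ j ∈ Finset.univ.erase s, P2 β η x i j * (if j = s then 0 else c)
        = ∑ j ∈ Finset.univ.erase s, P2 β η x i j * c := by
      refine Finset.sum_congr rfl fun j hj => ?_
      rw [if_neg (Finset.ne_of_mem_erase hj)]
    have h2 : ∑ j ∈ Finset.univ.erase s, P2 β η x i j = 1 - P2 β η x i s := by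
      have hr := hrow i
      rw [← Finset.add_sum_erase _ _ (Finset.mem_univ s)] at hr
      linarith
    rw [he, ← Finset.sum_mul, h2]
    simp
  -- P2 v₁ s = q since s ∉ x v₁
  have hPv : P2 β η x v₁ s = q := by
    unfold P2; rw [if_neg hcon]; ring
  -- lower bound: q * τ v₁ ≥ 1
  have hlow : 1 ≤ q * τ v₁ := by
    have hrec := hτ v₁ hv₁
    have hge : ∑ j, P2 β η x v₁ j * (if j = s then 0 else τ v₁)
        ≤ ∑ j, P2 β η x v₁ j * τ j := by
      refine Finset.sum_le_sum fun j _ => ?_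
      by_cases hj : j = s
      · simp [hj, hτs]
      · rw [if_neg hj]
        exact mul_le_mul_of_nonneg_left (hmin j hj) (hpos v₁ j).le
    rw [hsplit v₁ (τ v₁)] at hge
    rw [← hPv]; nlinarith [hrec]
  -- take a maximizer w of τ over nodes ≠ s
  obtain ⟨w, hwmem, hwmax⟩ := Finset.exists_max_image (Finset.univ.erase s) τ
    ⟨v₁, Finset.mem_erase.mpr ⟨hv₁, Finset.mem_univ v₁⟩⟩
  have hws : w ≠ s := Finset.ne_of_mem_erase hwmem
  have hwge : τ v₁ ≤ τ w := hmin w hws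
  -- upper bound: P2 w s * τ w ≤ 1
  have hup : P2 β η x w s * τ w ≤ 1 := by
    have hrec := hτ w hws
    have hle : ∑ j, P2 β η x w j * τ j
        ≤ ∑ j, P2 β η x w j * (if j = s then 0 else τ w) := by
      refine Finset.sum_le_sum fun j _ => ?_
      by_cases hj : j = s
      · simp [hj, hτs]
      · rw [if_neg hj]
        exact mul_le_mul_of_nonneg_left
          (hwmax j (Finset.mem_erase.mpr ⟨hj, Finset.mem_univ j⟩)) (hpos w j).le
    rw [hsplit w (τ w)] at hle
    nlinarith [hrec]
  have hPws : q ≤ P2 β η x w s := by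
    unfold P2; split_ifs <;> nlinarith [hη s]
  have hτwpos : 0 < τ w := by nlinarith
  have hqw : q * τ w ≤ 1 := le_trans (mul_le_mul_of_nonneg_right hPws hτwpos.le) hup
  -- τ is constant (= τ v₁) on nodes ≠ s
  have hτveq : τ v₁ = τ w := by nlinarith
  have hconst : ∀ i, i ≠ s → τ i = τ v₁ := by
    intro i hi
    have h1 := hmin i hi
    have h2 := hwmax i (Finset.mem_erase.mpr ⟨hi, Finset.mem_univ i⟩)
    linarith [hτveq]
  -- use an in-neighbor k of s
  obtain ⟨k, hk⟩ := hne
  have hks : k ≠ s := fun h => (hx s).2 (h ▸ hk)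
  have hPks : P2 β η x k s = β / 2 + q := by
    unfold P2; rw [if_pos hk]; ring
  have hrec := hτ k hks
  have hsum : ∑ j, P2 β η x k j * τ j
      = ∑ j, P2 β η x k j * (if j = s then 0 else τ v₁) := by
    refine Finset.sum_congr rfl fun j _ => ?_
    by_cases hj : j = s
    · simp [hj, hτs]
    · rw [if_neg hj, hconst j hj]
  rw [hsum, hsplit k (τ v₁), hconst k hks, hPks] at hrec
  nlinarith [hlow, hq]
end
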